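/- arXiv:2107.11893 — 5 statements merged into one kernel-verified Lean document; each statement's English description precedes it below -/
import Mathlib

section
/- Let φ be a non-negative function with φ ∈ L^1(0,∞). Then the Hausdorff operator H_{α,β,φ} is bounded from L^1(ℝ, A_{α,β}) to L^1(ℝ, A_{α,β}), and for every f ∈ L^1(ℝ, A_{α,β}) one has ∫_ℝ |H_{α,β,φ} f(x)| A_{α,β}(x) dx ≤ (∫_0^∞ φ(t) dt) · ∫_ℝ |f(x)| A_{α,β}(x) dx. -/
open MeasureTheory Set ENNReal

/-- The weight `A_{α,β}(x) = (sinh|x|)^{2α+1} (cosh|x|)^{2β+1}`. -/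
noncomputable def Aw (α β : ℝ) (x : ℝ) : ℝ :=
  Real.sinh |x| ^ (2 * α + 1) * Real.cosh |x| ^ (2 * β + 1)

/-- The Hausdorff operator associated with the Opdam–Cherednik transform. -/
noncomputable def Hop (α β : ℝ) (φ f : ℝ → ℝ) (x : ℝ) : ℝ :=
  ∫ t in Set.Ioi (0 : ℝ), (φ t / t) * f (x / t) * (Aw α β (x / t) / Aw α β x)

/-- The `L^p(I, A_{α,β})` norm, as an extended nonnegative real. -/
noncomputable def lpN (α β p : ℝ) (I : Set ℝ) (f : ℝ → ℝ) : ℝ≥0∞ :=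
  (∫⁻ x in I, ENNReal.ofReal (|f x| ^ p * Aw α β x)) ^ (1 / p)

lemma Aw_nonneg (α β x : ℝ) : 0 ≤ Aw α β x := by
  unfold Aw
  have h1 : (0:ℝ) ≤ Real.sinh |x| := by simp
  exact mul_nonneg (Real.rpow_nonneg h1 _) (Real.rpow_nonneg (Real.cosh_pos _).le _)

lemma Aw_pos (α β : ℝ) {x : ℝ} (hx : x ≠ 0) : 0 < Aw α β x := by
  unfold Aw
  have h1 : (0:ℝ) < Real.sinh |x| := by
    simpa using Real.sinh_pos_iff.mpr (abs_pos.mpr hx)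
  exact mul_pos (Real.rpow_pos_of_pos h1 _) (Real.rpow_pos_of_pos (Real.cosh_pos _) _)

lemma Aw_zero (α β : ℝ) (hα : -(1/2 : ℝ) < α) : Aw α β 0 = 0 := by
  unfold Aw
  rw [abs_zero, Real.sinh_zero, Real.zero_rpow (by linarith), zero_mul]

lemma Aw_measurable (α β : ℝ) (hβ : -(1/2 : ℝ) ≤ β) (hα : -(1/2 : ℝ) < α) :
    Measurable (Aw α β) := by
  unfold Aw
  have h1 : Continuous fun x : ℝ => Real.sinh |x| := Real.continuous_sinh.comp continuous_abs
  have h2 : Continuous fun x : ℝ => Real.cosh |x| := Real.continuous_cosh.comp continuous_abs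
  exact ((h1.rpow_const fun x => Or.inr (by linarith)).mul
    (h2.rpow_const fun x => Or.inr (by linarith))).measurable

lemma abs_integral_le_lintegral_abs {μ : Measure ℝ} (h : ℝ → ℝ) :
    ENNReal.ofReal |∫ t, h t ∂μ| ≤ ∫⁻ t, ENNReal.ofReal |h t| ∂μ := by
  by_cases hint : Integrable h μ
  · calc ENNReal.ofReal |∫ t, h t ∂μ| ≤ ENNReal.ofReal (∫ t, |h t| ∂μ) := by
          refine ENNReal.ofReal_le_ofReal ?_
          simpa [Real.norm_eq_abs] using norm_integral_le_integral_norm (μ := μ) h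
    _ = ∫⁻ t, ENNReal.ofReal (|h t|) ∂μ :=
          ofReal_integral_eq_lintegral_ofReal hint.abs (Filter.Eventually.of_forall fun t => abs_nonneg _)
  · rw [integral_undef hint]; simp

/-- Boundedness of the Hausdorff operator on `L^1(ℝ, A_{α,β})`. -/
theorem hausdorff_L1_bounded (α β : ℝ) (hβα : β ≤ α) (hβ : -(1/2 : ℝ) ≤ β)
    (hα : -(1/2 : ℝ) < α)
    (φ : ℝ → ℝ) (hφpos : ∀ t, 0 ≤ φ t) (hφint : IntegrableOn φ (Set.Ioi 0))
    (f : ℝ → ℝ) (hf : Measurable f)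
    (hfL1 : ∫⁻ x, ENNReal.ofReal (|f x| * Aw α β x) < ⊤) :
    ∫⁻ x, ENNReal.ofReal (|Hop α β φ f x| * Aw α β x) ≤
      (∫⁻ t in Set.Ioi (0 : ℝ), ENNReal.ofReal (φ t)) *
        ∫⁻ x, ENNReal.ofReal (|f x| * Aw α β x) := by
  set G : ℝ → ℝ≥0∞ := fun y => ENNReal.ofReal (|f y| * Aw α β y) with hGdef
  have hG : Measurable G :=
    ENNReal.measurable_ofReal.comp ((hf.abs).mul (Aw_measurable α β hβ hα))
  set N : ℝ≥0∞ := ∫⁻ x, G x with hNdef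
  -- pointwise bound
  have key : ∀ x, ENNReal.ofReal (|Hop α β φ f x| * Aw α β x) ≤
      ∫⁻ t in Set.Ioi (0:ℝ), ENNReal.ofReal (φ t / t * (|f (x/t)| * Aw α β (x/t))) := by
    intro x
    by_cases hx : x = 0
    · simp [hx, Aw_zero α β hα]
    · have hc : 0 < Aw α β x := Aw_pos α β hx
      have h1 : |Hop α β φ f x| * Aw α β x = |Hop α β φ f x * Aw α β x| := by
        rw [abs_mul, abs_of_nonneg hc.le]
      have h2 : Hop α β φ f x * Aw α β x =
          ∫ t in Set.Ioi (0:ℝ),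
            (φ t / t * f (x/t) * (Aw α β (x/t) / Aw α β x)) * Aw α β x := by
        rw [Hop]; exact (integral_mul_const _ _).symm
      rw [h1, h2]
      refine le_trans (abs_integral_le_lintegral_abs _) ?_
      refine le_of_eq (setLIntegral_congr_fun measurableSet_Ioi
        (fun t ht => ?_))
      have ht' : (0:ℝ) < t := ht
      have hcancel : (φ t / t * f (x/t) * (Aw α β (x/t) / Aw α β x)) * Aw α β x
          = φ t / t * f (x/t) * Aw α β (x/t) := by
        field_simp
      rw [hcancel, abs_mul, abs_mul, abs_of_nonneg (div_nonneg (hφpos t) ht'.le),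
        abs_of_nonneg (Aw_nonneg α β _), mul_assoc]
  have step1 : ∫⁻ x, ENNReal.ofReal (|Hop α β φ f x| * Aw α β x) ≤
      ∫⁻ x, ∫⁻ t in Set.Ioi (0:ℝ), ENNReal.ofReal (φ t / t * (|f (x/t)| * Aw α β (x/t))) :=
    lintegral_mono key
  -- swap
  have hφae : AEMeasurable φ (volume.restrict (Set.Ioi (0:ℝ))) :=
    hφint.aestronglyMeasurable.aemeasurable
  have hswapmeas : AEMeasurable
      (Function.uncurry fun x t => ENNReal.ofReal (φ t / t * (|f (x/t)| * Aw α β (x/t))))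
      (volume.prod (volume.restrict (Set.Ioi (0:ℝ)))) := by
    apply ENNReal.measurable_ofReal.comp_aemeasurable
    apply AEMeasurable.mul
    · exact (hφae.comp_snd).div (measurable_snd.aemeasurable)
    · have hmeas : Measurable fun p : ℝ × ℝ => |f (p.1 / p.2)| * Aw α β (p.1 / p.2) :=
        ((hf.comp (measurable_fst.div measurable_snd)).abs).mul
          ((Aw_measurable α β hβ hα).comp (measurable_fst.div measurable_snd))
      exact hmeas.aemeasurable
  have step2 : (∫⁻ x, ∫⁻ t in Set.Ioi (0:ℝ),
        ENNReal.ofReal (φ t / t * (|f (x/t)| * Aw α β (x/t))))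
      = ∫⁻ t in Set.Ioi (0:ℝ), ∫⁻ x, ENNReal.ofReal (φ t / t * (|f (x/t)| * Aw α β (x/t))) :=
    lintegral_lintegral_swap hswapmeas
  -- inner integral
  have step3 : ∀ t ∈ Set.Ioi (0:ℝ),
      (∫⁻ x, ENNReal.ofReal (φ t / t * (|f (x/t)| * Aw α β (x/t)))) = ENNReal.ofReal (φ t) * N := by
    intro t ht
    have ht' : (0:ℝ) < t := ht
    have h1 : ∀ x : ℝ, ENNReal.ofReal (φ t / t * (|f (x/t)| * Aw α β (x/t)))
        = ENNReal.ofReal (φ t / t) * G (x/t) := fun x =>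
      ENNReal.ofReal_mul (div_nonneg (hφpos t) ht'.le)
    simp only [h1]
    rw [lintegral_const_mul' _ _ ENNReal.ofReal_ne_top]
    have hmap : (∫⁻ x, G (x/t)) = ENNReal.ofReal t * N := by
      have h2 : (fun x : ℝ => G (x/t)) = fun x => G (t⁻¹ * x) := by
        funext x; rw [div_eq_inv_mul]
      rw [h2, ← lintegral_map hG (measurable_const_mul t⁻¹),
        Real.map_volume_mul_left (inv_ne_zero ht'.ne'), lintegral_smul_measure,
        inv_inv, abs_of_pos ht', smul_eq_mul]
    rw [hmap, ← mul_assoc, ← ENNReal.ofReal_mul (div_nonneg (hφpos t) ht'.le),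
      div_mul_cancel₀ _ ht'.ne']
  calc ∫⁻ x, ENNReal.ofReal (|Hop α β φ f x| * Aw α β x)
      ≤ ∫⁻ t in Set.Ioi (0:ℝ), ∫⁻ x, ENNReal.ofReal (φ t / t * (|f (x/t)| * Aw α β (x/t))) :=
        step1.trans (le_of_eq step2)
    _ = ∫⁻ t in Set.Ioi (0:ℝ), ENNReal.ofReal (φ t) * N :=
        setLIntegral_congr_fun measurableSet_Ioi step3
    _ = (∫⁻ t in Set.Ioi (0:ℝ), ENNReal.ofReal (φ t)) * N :=
        lintegral_mul_const' N _ hfL1.ne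
end

section
/- Let 1 < p < ∞, let φ be a non-negative function with φ ∈ L^1(0,∞), and assume A_inf > 0. If there is a constant N ≥ 0 such that ‖H_{α,β,φ} f‖_{L^p(ℝ,A_{α,β})} ≤ N · ‖f‖_{L^p(ℝ,A_{α,β})} for every f ∈ L^p(ℝ, A_{α,β}), then N ≥ A_inf. -/
open MeasureTheory Set ENNReal

instance : Nonempty {u : ℝ // u ≠ 0} := ⟨⟨1, one_ne_zero⟩⟩
instance : Nonempty {q : ℚ // (q : ℝ) ≠ 0} := ⟨⟨1, by norm_num⟩⟩


noncomputable def cfun (α β : ℝ) (t : ℝ) : ℝ :=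
  ⨅ u : {u : ℝ // u ≠ 0}, Aw α β u.1 / Aw α β (t * u.1)

noncomputable def cratf (α β : ℝ) (t : ℝ) : ℝ :=
  ⨅ q : {q : ℚ // (q : ℝ) ≠ 0}, Aw α β q / Aw α β (t * q)

lemma continuous_Aw {α β : ℝ} (hβ : -(1/2 : ℝ) ≤ β) (hα : -(1/2 : ℝ) < α) :
    Continuous (Aw α β) := by
  apply Continuous.mul
  · exact (Real.continuous_sinh.comp continuous_abs).rpow_const
      (fun x => Or.inr (by linarith))
  · exact (Real.continuous_cosh.comp continuous_abs).rpow_const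
      (fun x => Or.inr (by linarith))

lemma cfun_nonneg (α β t : ℝ) : 0 ≤ cfun α β t :=
  le_ciInf fun u => div_nonneg (Aw_nonneg _ _ _) (Aw_nonneg _ _ _)

lemma cfun_le (α β t : ℝ) {u : ℝ} (hu : u ≠ 0) :
    cfun α β t ≤ Aw α β u / Aw α β (t * u) :=
  ciInf_le ⟨0, by rintro y ⟨v, rfl⟩; exact div_nonneg (Aw_nonneg _ _ _) (Aw_nonneg _ _ _)⟩
    (⟨u, hu⟩ : {u : ℝ // u ≠ 0})

lemma cfun_eq_cratf {α β : ℝ} (hβ : -(1/2 : ℝ) ≤ β) (hα : -(1/2 : ℝ) < α)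
    {t : ℝ} (ht : t ≠ 0) : cfun α β t = cratf α β t := by
  have hbdd : ∀ s : Set ℝ, (∀ y ∈ s, (0:ℝ) ≤ y) → BddBelow s := fun s hs => ⟨0, hs⟩
  apply le_antisymm
  · exact le_ciInf fun q => cfun_le α β t q.2
  · refine le_ciInf fun u => ?_
    set F : ℝ → ℝ := fun v => Aw α β v / Aw α β (t * v) with hF
    have hFc : ContinuousAt F u.1 := by
      apply ContinuousAt.div
      · exact (continuous_Aw hβ hα).continuousAt
      · exact ((continuous_Aw hβ hα).comp (continuous_const.mul continuous_id)).continuousAt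
      · exact (Aw_pos α β (mul_ne_zero ht u.2)).ne'
    refine le_of_forall_pos_le_add fun ε hε => ?_
    have h1 : ∀ᶠ v in nhds u.1, F v < F u.1 + ε :=
      hFc.eventually_lt continuousAt_const (by linarith)
    obtain ⟨V, hVsub, hVopen, hVu⟩ := eventually_nhds_iff.1 h1
    have hWopen : IsOpen (V ∩ {v : ℝ | v ≠ 0}) := hVopen.inter isOpen_ne
    have hWu : u.1 ∈ V ∩ {v : ℝ | v ≠ 0} := ⟨hVu, u.2⟩
    obtain ⟨q, hq⟩ := Rat.denseRange_cast.exists_mem_open hWopen ⟨u.1, hWu⟩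
    have hb2 : BddBelow (Set.range fun q : {q : ℚ // (q:ℝ) ≠ 0} => Aw α β q / Aw α β (t * q)) := by
      refine ⟨0, ?_⟩
      rintro y ⟨v, rfl⟩
      exact div_nonneg (Aw_nonneg _ _ _) (Aw_nonneg _ _ _)
    calc cratf α β t ≤ F q := ciInf_le hb2 (⟨q, hq.2⟩ : {q : ℚ // (q:ℝ) ≠ 0})
      _ ≤ F u.1 + ε := (hVsub _ hq.1).le

lemma measurable_cratf {α β : ℝ} (hβ : -(1/2 : ℝ) ≤ β) (hα : -(1/2 : ℝ) < α) :
    Measurable (cratf α β) := by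
  apply Measurable.iInf
  intro q
  exact measurable_const.div ((continuous_Aw hβ hα).measurable.comp (measurable_id.mul_const _))

lemma lintegral_inv_Icc {a b : ℝ} (ha : 0 < a) (hab : a ≤ b) :
    ∫⁻ x in Set.Icc a b, ENNReal.ofReal x⁻¹ = ENNReal.ofReal (Real.log (b / a)) := by
  have hInt : IntegrableOn (fun x : ℝ => x⁻¹) (Set.Icc a b) := by
    apply ContinuousOn.integrableOn_Icc
    exact continuousOn_id.inv₀ fun x hx => (lt_of_lt_of_le ha hx.1).ne'
  have hnn : 0 ≤ᵐ[volume.restrict (Set.Icc a b)] fun x : ℝ => x⁻¹ := by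
    refine (ae_restrict_iff' measurableSet_Icc).2 (Filter.Eventually.of_forall fun x hx => ?_)
    exact inv_nonneg.2 (le_trans ha.le hx.1)
  rw [← MeasureTheory.ofReal_integral_eq_lintegral_ofReal hInt hnn]
  congr 1
  rw [MeasureTheory.integral_Icc_eq_integral_Ioc, ← intervalIntegral.integral_of_le hab]
  apply integral_inv
  rw [Set.uIcc_of_le hab]
  exact fun h => absurd (h.1) (by linarith)

noncomputable def testf (α β p M : ℝ) (y : ℝ) : ℝ :=
  if y ∈ Set.Icc 1 M then Aw α β y ^ (-(1/p)) * y ^ (-(1/p)) else 0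

lemma testf_meas {α β : ℝ} (hβ : -(1/2 : ℝ) ≤ β) (hα : -(1/2 : ℝ) < α) (p M : ℝ) :
    Measurable (testf α β p M) := by
  apply Measurable.ite measurableSet_Icc _ measurable_const
  exact ((continuous_Aw hβ hα).measurable.pow_const _ |>.mul (measurable_id.pow_const _))

lemma testf_nonneg (α β p M : ℝ) (y : ℝ) : 0 ≤ testf α β p M y := by
  unfold testf
  split_ifs with h
  · exact mul_nonneg (Real.rpow_nonneg (Aw_nonneg _ _ _) _)
      (Real.rpow_nonneg (le_trans zero_le_one h.1) _)
  · exact le_refl 0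

lemma testf_pow {α β p : ℝ} (hp : 0 < p) (M : ℝ) (x : ℝ) :
    |testf α β p M x| ^ p * Aw α β x = (Set.Icc (1:ℝ) M).indicator (fun x => x⁻¹) x := by
  by_cases hx : x ∈ Set.Icc (1:ℝ) M
  · have hx0 : (0:ℝ) < x := lt_of_lt_of_le one_pos hx.1
    have hAx : 0 < Aw α β x := Aw_pos α β hx0.ne'
    rw [Set.indicator_of_mem hx]
    have hfx : testf α β p M x = Aw α β x ^ (-(1/p)) * x ^ (-(1/p)) := if_pos hx
    rw [hfx, abs_of_nonneg (mul_nonneg (Real.rpow_nonneg hAx.le _) (Real.rpow_nonneg hx0.le _))]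
    rw [Real.mul_rpow (Real.rpow_nonneg hAx.le _) (Real.rpow_nonneg hx0.le _),
      ← Real.rpow_mul hAx.le, ← Real.rpow_mul hx0.le]
    have hpp : -(1/p) * p = -1 := by field_simp
    rw [hpp, Real.rpow_neg_one, Real.rpow_neg_one, mul_right_comm,
      inv_mul_cancel₀ hAx.ne', one_mul]
  · have hfx : testf α β p M x = 0 := if_neg hx
    rw [Set.indicator_of_notMem hx, hfx, abs_zero, Real.zero_rpow hp.ne', zero_mul]


lemma testf_lint {α β p : ℝ} (hp : 0 < p) {M : ℝ} (hM : 1 ≤ M) :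
    ∫⁻ x, ENNReal.ofReal (|testf α β p M x| ^ p * Aw α β x) = ENNReal.ofReal (Real.log M) := by
  have h1 : ∀ x, ENNReal.ofReal (|testf α β p M x| ^ p * Aw α β x)
      = (Set.Icc (1:ℝ) M).indicator (fun x => ENNReal.ofReal x⁻¹) x := by
    intro x
    rw [testf_pow hp M x]
    by_cases hx : x ∈ Set.Icc (1:ℝ) M
    · simp [hx]
    · simp [hx]
  simp_rw [h1]
  rw [lintegral_indicator measurableSet_Icc _, lintegral_inv_Icc one_pos hM, div_one]

lemma cfun_aesm {α β : ℝ} (hβ : -(1/2 : ℝ) ≤ β) (hα : -(1/2 : ℝ) < α)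
    {s : Set ℝ} (hs : MeasurableSet s) (hsub : s ⊆ Set.Ioi 0) :
    AEMeasurable (cfun α β) (volume.restrict s) := by
  apply (measurable_cratf hβ hα).aemeasurable.congr
  refine (ae_restrict_iff' hs).2 (Filter.Eventually.of_forall fun t ht => ?_)
  exact (cfun_eq_cratf hβ hα (ne_of_gt (hsub ht))).symm

lemma w_int {α β : ℝ} (hβ : -(1/2 : ℝ) ≤ β) (hα : -(1/2 : ℝ) < α)
    {p : ℝ} (hp : 1 < p) (φ : ℝ → ℝ) (hφpos : ∀ t, 0 ≤ φ t)
    (hφint : IntegrableOn φ (Set.Ioi 0))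
    {δ R : ℝ} (hδ : 0 < δ) (hδR : δ ≤ R) :
    IntegrableOn (fun t => φ t / t * t ^ (1/p) * cfun α β t ^ (1 - 1/p)) (Set.Ioc δ R) := by
  have hp0 : (0:ℝ) < p := by linarith
  have hip : (0:ℝ) < 1/p := by positivity
  have hq : (0:ℝ) ≤ 1 - 1/p := by
    rw [sub_nonneg, div_le_one hp0]; linarith
  have hR : 0 < R := lt_of_lt_of_le hδ hδR
  have hsub : Set.Ioc δ R ⊆ Set.Ioi (0:ℝ) := fun t ht => lt_trans hδ ht.1
  -- lower bound for Aw on [δ, R]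
  obtain ⟨z, hzmem, hzmin⟩ := isCompact_Icc.exists_isMinOn (Set.nonempty_Icc.2 hδR)
    (continuous_Aw hβ hα).continuousOn
  have hz0 : 0 < Aw α β z := Aw_pos α β (lt_of_lt_of_le hδ hzmem.1).ne'
  set CB : ℝ := (Aw α β 1 / Aw α β z) ^ (1 - 1/p) with hCB
  have hCB0 : 0 ≤ CB := Real.rpow_nonneg (div_nonneg (Aw_nonneg _ _ _) (Aw_nonneg _ _ _)) _
  set C : ℝ := δ⁻¹ * R ^ (1/p) * CB with hC
  have hC0 : 0 ≤ C := by positivity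
  -- a.e. measurability
  have haesm : AEStronglyMeasurable (fun t => φ t / t * t ^ (1/p) * cfun α β t ^ (1 - 1/p))
      (volume.restrict (Set.Ioc δ R)) := by
    have h1 : AEMeasurable φ (volume.restrict (Set.Ioc δ R)) :=
      (hφint.aestronglyMeasurable.aemeasurable).mono_measure
        (Measure.restrict_mono hsub le_rfl)
    have h2 : AEMeasurable (cfun α β) (volume.restrict (Set.Ioc δ R)) :=
      cfun_aesm hβ hα measurableSet_Ioc hsub
    exact (((h1.div aemeasurable_id).mul
      ((measurable_id.pow_const (1/p)).aemeasurable)).mul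
      (h2.pow_const (1 - 1/p))).aestronglyMeasurable
  apply Integrable.mono' ((hφint.mono_set hsub).mul_const C) haesm
  refine (ae_restrict_iff' measurableSet_Ioc).2 (Filter.Eventually.of_forall fun t ht => ?_)
  have ht0 : 0 < t := lt_trans hδ ht.1
  have hwnn : 0 ≤ φ t / t * t ^ (1/p) * cfun α β t ^ (1 - 1/p) := by
    have := hφpos t
    have := cfun_nonneg α β t
    positivity
  rw [Real.norm_eq_abs, abs_of_nonneg hwnn]
  have b1 : φ t / t ≤ φ t * δ⁻¹ := by
    rw [div_eq_mul_inv]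
    exact mul_le_mul_of_nonneg_left (by
      rw [inv_le_inv₀ ht0 hδ]; exact ht.1.le) (hφpos t)
  have b2 : t ^ (1/p) ≤ R ^ (1/p) := Real.rpow_le_rpow ht0.le ht.2 hip.le
  have b3 : cfun α β t ^ (1 - 1/p) ≤ CB := by
    apply Real.rpow_le_rpow (cfun_nonneg _ _ _) _ hq
    calc cfun α β t ≤ Aw α β 1 / Aw α β (t * 1) := cfun_le α β t one_ne_zero
      _ = Aw α β 1 / Aw α β t := by rw [mul_one]
      _ ≤ Aw α β 1 / Aw α β z := by
          apply div_le_div_of_nonneg_left (Aw_nonneg _ _ _) hz0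
          exact hzmin ⟨ht.1.le, ht.2⟩
  calc φ t / t * t ^ (1/p) * cfun α β t ^ (1 - 1/p)
      ≤ (φ t * δ⁻¹) * R ^ (1/p) * CB := by
        apply mul_le_mul _ b3 (Real.rpow_nonneg (cfun_nonneg _ _ _) _) _
        · exact mul_le_mul b1 b2 (Real.rpow_nonneg ht0.le _)
            (mul_nonneg (hφpos t) (by positivity))
        · exact mul_nonneg (mul_nonneg (hφpos t) (by positivity)) (Real.rpow_nonneg hR.le _)
    _ = φ t * C := by rw [hC]; ring

lemma hop_lower {α β : ℝ} (hβ : -(1/2 : ℝ) ≤ β) (hα : -(1/2 : ℝ) < α)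
    {p : ℝ} (hp : 1 < p) (φ : ℝ → ℝ) (hφpos : ∀ t, 0 ≤ φ t)
    (hφint : IntegrableOn φ (Set.Ioi 0))
    {δ R M : ℝ} (hδ : 0 < δ) (hδR : δ ≤ R) (hM : 1 ≤ M)
    {x : ℝ} (hx : x ∈ Set.Icc R (M * δ)) :
    (∫ t in Set.Ioc δ R, φ t / t * t ^ (1/p) * cfun α β t ^ (1 - 1/p))
      * (x ^ (-(1/p)) * Aw α β x ^ (-(1/p)))
      ≤ Hop α β φ (testf α β p M) x := by
  have hp0 : (0:ℝ) < p := by linarith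
  have hip : (0:ℝ) < 1/p := by positivity
  have hq : (0:ℝ) ≤ 1 - 1/p := by
    rw [sub_nonneg, div_le_one hp0]; linarith
  have hR : 0 < R := lt_of_lt_of_le hδ hδR
  have hx0 : 0 < x := lt_of_lt_of_le hR hx.1
  have hA : 0 < Aw α β x := Aw_pos α β hx0.ne'
  set K : ℝ := x ^ (-(1/p)) * Aw α β x ^ (-(1/p)) with hK
  have hK0 : 0 ≤ K := mul_nonneg (Real.rpow_nonneg hx0.le _) (Real.rpow_nonneg hA.le _)
  set h : ℝ → ℝ := fun t => φ t / t * testf α β p M (x / t) * (Aw α β (x / t) / Aw α β x)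
    with hh
  have hHop : Hop α β φ (testf α β p M) x = ∫ t in Set.Ioi (0:ℝ), h t := rfl
  -- pointwise bound on Ioc δ R
  have hpt : ∀ t ∈ Set.Ioc δ R,
      (φ t / t * t ^ (1/p) * cfun α β t ^ (1 - 1/p)) * K ≤ h t := by
    intro t ht
    have ht0 : 0 < t := lt_trans hδ ht.1
    have htx : t ≤ x := le_trans ht.2 hx.1
    have hxt1 : (1:ℝ) ≤ x / t := (one_le_div ht0).2 htx
    have hxtM : x / t ≤ M := by
      rw [div_le_iff₀ ht0]
      calc x ≤ M * δ := hx.2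
        _ ≤ M * t := mul_le_mul_of_nonneg_left ht.1.le (by linarith)
    have hmem : x / t ∈ Set.Icc (1:ℝ) M := ⟨hxt1, hxtM⟩
    set a : ℝ := Aw α β (x / t) with ha'
    have ha : 0 < a := Aw_pos α β (by positivity : (0:ℝ) < x / t).ne'
    have hft : testf α β p M (x / t) = a ^ (-(1/p)) * (x / t) ^ (-(1/p)) := if_pos hmem
    have e1 : (x / t) ^ (-(1/p)) = x ^ (-(1/p)) * t ^ (1/p) := by
      rw [Real.div_rpow hx0.le ht0.le, Real.rpow_neg ht0.le, div_eq_mul_inv, inv_inv]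
    have e3 : a ^ (-(1/p)) * a = a ^ (1 - 1/p) := by
      nth_rewrite 2 [← Real.rpow_one a]
      rw [← Real.rpow_add ha]
      congr 1; ring
    have hcle : cfun α β t ≤ a / Aw α β x := by
      have := cfun_le α β t (u := x / t) (by positivity : (0:ℝ) < x / t).ne'
      rwa [show t * (x / t) = x by field_simp] at this
    have hcc : cfun α β t ^ (1 - 1/p) * Aw α β x ^ (-(1/p))
        ≤ a ^ (1 - 1/p) * (Aw α β x)⁻¹ := by
      have h1 : cfun α β t ^ (1 - 1/p) ≤ a ^ (1 - 1/p) / Aw α β x ^ (1 - 1/p) := by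
        rw [← Real.div_rpow ha.le hA.le]
        exact Real.rpow_le_rpow (cfun_nonneg _ _ _) hcle hq
      calc cfun α β t ^ (1 - 1/p) * Aw α β x ^ (-(1/p))
          ≤ (a ^ (1 - 1/p) / Aw α β x ^ (1 - 1/p)) * Aw α β x ^ (-(1/p)) :=
            mul_le_mul_of_nonneg_right h1 (Real.rpow_nonneg hA.le _)
        _ = a ^ (1 - 1/p) * (Aw α β x ^ (-(1 - 1/p)) * Aw α β x ^ (-(1/p))) := by
            rw [div_eq_mul_inv, ← Real.rpow_neg hA.le, mul_assoc]
        _ = a ^ (1 - 1/p) * (Aw α β x)⁻¹ := by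
            rw [← Real.rpow_add hA, show -(1 - 1/p) + -(1/p) = -1 by ring, Real.rpow_neg_one]
    have hnn : 0 ≤ φ t / t * t ^ (1/p) * x ^ (-(1/p)) := by
      have := hφpos t
      positivity
    calc (φ t / t * t ^ (1/p) * cfun α β t ^ (1 - 1/p)) * K
        = (φ t / t * t ^ (1/p) * x ^ (-(1/p))) * (cfun α β t ^ (1 - 1/p) * Aw α β x ^ (-(1/p))) := by
          rw [hK]; ring
      _ ≤ (φ t / t * t ^ (1/p) * x ^ (-(1/p))) * (a ^ (1 - 1/p) * (Aw α β x)⁻¹) :=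
          mul_le_mul_of_nonneg_left hcc hnn
      _ = φ t / t * (a ^ (-(1/p)) * (x / t) ^ (-(1/p))) * (a / Aw α β x) := by
          rw [e1, ← e3]; ring
      _ = h t := by rw [hh]; simp only []; rw [hft]
  -- integrability of h on Ioi 0
  have hsub : Set.Ioc δ R ⊆ Set.Ioi (0:ℝ) := fun t ht => lt_trans hδ ht.1
  obtain ⟨z, hzmem, hCAmax⟩ := isCompact_Icc.exists_isMaxOn (Set.nonempty_Icc.2 hM)
    (((continuous_Aw hβ hα).rpow_const (fun _ => Or.inr hq)).continuousOn)
  set CA : ℝ := Aw α β z ^ (1 - 1/p) with hCAdef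
  have hCA0 : 0 ≤ CA := Real.rpow_nonneg (Aw_nonneg _ _ _) _
  have hCb : 0 ≤ M / R * CA / Aw α β x := by positivity
  have hhnn : ∀ t ∈ Set.Ioi (0:ℝ), 0 ≤ h t := by
    intro t ht
    have ht0 : (0:ℝ) < t := ht
    have h1 := hφpos t
    have h2 := testf_nonneg α β p M (x / t)
    have h3 := Aw_nonneg α β (x / t)
    simp only [hh]
    positivity
  have hbound : ∀ t ∈ Set.Ioi (0:ℝ), |h t| ≤ φ t * (M / R * CA / Aw α β x) := by
    intro t ht
    have ht0 : (0:ℝ) < t := ht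
    rw [abs_of_nonneg (hhnn t ht)]
    by_cases hft : x / t ∈ Set.Icc (1:ℝ) M
    · have hxt0 : (0:ℝ) < x / t := by positivity
      have ha : 0 < Aw α β (x / t) := Aw_pos α β hxt0.ne'
      have hfeq : testf α β p M (x / t) = Aw α β (x / t) ^ (-(1/p)) * (x / t) ^ (-(1/p)) :=
        if_pos hft
      have e3' : Aw α β (x / t) ^ (-(1/p)) * Aw α β (x / t) = Aw α β (x / t) ^ (1 - 1/p) := by
        nth_rewrite 2 [← Real.rpow_one (Aw α β (x / t))]
        rw [← Real.rpow_add ha]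
        congr 1; ring
      have heq : h t = φ t * (t⁻¹ * ((x / t) ^ (-(1/p)) * Aw α β (x / t) ^ (1 - 1/p))
          / Aw α β x) := by
        simp only [hh]
        rw [hfeq, ← e3']; ring
      rw [heq]
      apply mul_le_mul_of_nonneg_left _ (hφpos t)
      have b1 : t⁻¹ ≤ M / R := by
        have hxM : x ≤ M * t := (div_le_iff₀ ht0).1 hft.2
        rw [inv_eq_one_div, div_le_div_iff₀ ht0 hR]
        have hRx := hx.1
        nlinarith
      have b2 : (x / t) ^ (-(1/p)) ≤ 1 :=
        Real.rpow_le_one_of_one_le_of_nonpos hft.1 (by linarith)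
      have b3 : Aw α β (x / t) ^ (1 - 1/p) ≤ CA := hCAmax hft
      have step : t⁻¹ * ((x / t) ^ (-(1/p)) * Aw α β (x / t) ^ (1 - 1/p)) ≤ M / R * CA := by
        calc t⁻¹ * ((x / t) ^ (-(1/p)) * Aw α β (x / t) ^ (1 - 1/p))
            ≤ M / R * (1 * CA) :=
              mul_le_mul b1 (mul_le_mul b2 b3 (Real.rpow_nonneg (Aw_nonneg _ _ _) _) zero_le_one)
                (mul_nonneg (Real.rpow_nonneg hxt0.le _)
                  (Real.rpow_nonneg (Aw_nonneg _ _ _) _)) (by positivity)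
          _ = M / R * CA := by rw [one_mul]
      exact div_le_div_of_nonneg_right step hA.le |>.trans_eq rfl
    · have hfeq : testf α β p M (x / t) = 0 := if_neg hft
      simp only [hh]
      rw [hfeq, mul_zero, zero_mul]
      exact mul_nonneg (hφpos t) hCb
  have haesm : AEStronglyMeasurable h (volume.restrict (Set.Ioi 0)) := by
    have m1 : Measurable fun t : ℝ => x / t := measurable_const.div measurable_id
    have mf : Measurable fun t : ℝ => testf α β p M (x / t) := (testf_meas hβ hα p M).comp m1
    have mA : Measurable fun t : ℝ => Aw α β (x / t) / Aw α β x :=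
      ((continuous_Aw hβ hα).measurable.comp m1).div_const _
    exact ((((hφint.aestronglyMeasurable.aemeasurable).div aemeasurable_id).mul
      mf.aemeasurable).mul mA.aemeasurable).aestronglyMeasurable
  have hint : IntegrableOn h (Set.Ioi 0) := by
    apply Integrable.mono' (hφint.mul_const (M / R * CA / Aw α β x)) haesm
    refine (ae_restrict_iff' measurableSet_Ioi).2 (Filter.Eventually.of_forall fun t ht => ?_)
    rw [Real.norm_eq_abs]
    exact hbound t ht
  have hwKint : IntegrableOn
      (fun t => (φ t / t * t ^ (1/p) * cfun α β t ^ (1 - 1/p)) * K) (Set.Ioc δ R) :=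
    (w_int hβ hα hp φ hφpos hφint hδ hδR).mul_const K
  calc (∫ t in Set.Ioc δ R, φ t / t * t ^ (1/p) * cfun α β t ^ (1 - 1/p)) * K
      = ∫ t in Set.Ioc δ R, (φ t / t * t ^ (1/p) * cfun α β t ^ (1 - 1/p)) * K :=
        (integral_mul_const K _).symm
    _ ≤ ∫ t in Set.Ioc δ R, h t :=
        setIntegral_mono_on hwKint (hint.mono_set hsub) measurableSet_Ioc hpt
    _ ≤ ∫ t in Set.Ioi (0:ℝ), h t := by
        have hnn : 0 ≤ᵐ[volume.restrict (Set.Ioi 0)] h :=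
          (ae_restrict_iff' measurableSet_Ioi).2 (Filter.Eventually.of_forall hhnn)
        have h5 := MeasureTheory.setIntegral_le_integral (s := Set.Ioc δ R) hint hnn
        rwa [Measure.restrict_restrict measurableSet_Ioc,
          Set.inter_eq_left.2 hsub] at h5
    _ = Hop α β φ (testf α β p M) x := hHop.symm


lemma main_est {α β : ℝ} (hβ : -(1/2 : ℝ) ≤ β) (hα : -(1/2 : ℝ) < α)
    {p : ℝ} (hp : 1 < p) (φ : ℝ → ℝ) (hφpos : ∀ t, 0 ≤ φ t)
    (hφint : IntegrableOn φ (Set.Ioi 0)) {N : ℝ} (hN : 0 ≤ N)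
    (hbdd : ∀ f : ℝ → ℝ, Measurable f → lpN α β p Set.univ f < ⊤ →
      lpN α β p Set.univ (Hop α β φ f) ≤ ENNReal.ofReal N * lpN α β p Set.univ f)
    {δ R M : ℝ} (hδ : 0 < δ) (hδR : δ ≤ R) (hM : 1 ≤ M) (hRM : R ≤ M * δ) :
    (∫ t in Set.Ioc δ R, φ t / t * t ^ (1/p) * cfun α β t ^ (1 - 1/p)) ^ p
      * Real.log (M * δ / R) ≤ N ^ p * Real.log M := by
  have hp0 : (0:ℝ) < p := by linarith
  have hpne : p ≠ 0 := hp0.ne'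
  have hR : 0 < R := lt_of_lt_of_le hδ hδR
  set J : ℝ := ∫ t in Set.Ioc δ R, φ t / t * t ^ (1/p) * cfun α β t ^ (1 - 1/p) with hJ
  have hJ0 : 0 ≤ J := by
    apply setIntegral_nonneg measurableSet_Ioc
    intro t ht
    have ht0 : 0 < t := lt_trans hδ ht.1
    have h1 := hφpos t
    have h2 := cfun_nonneg α β t
    positivity
  set f : ℝ → ℝ := testf α β p M with hf
  have hlintf : ∫⁻ x, ENNReal.ofReal (|f x| ^ p * Aw α β x) = ENNReal.ofReal (Real.log M) :=
    testf_lint hp0 hM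
  have hlpf : lpN α β p Set.univ f = ENNReal.ofReal (Real.log M) ^ (1/p) := by
    rw [lpN, Measure.restrict_univ, hlintf]
  have hlt : lpN α β p Set.univ f < ⊤ := by
    rw [hlpf]
    exact ENNReal.rpow_lt_top_of_nonneg (by positivity) ENNReal.ofReal_ne_top
  have hb := hbdd f (testf_meas hβ hα p M) hlt
  have hbp : (lpN α β p Set.univ (Hop α β φ f)) ^ p
      ≤ ENNReal.ofReal (N ^ p) * ENNReal.ofReal (Real.log M) := by
    calc (lpN α β p Set.univ (Hop α β φ f)) ^ p
        ≤ (ENNReal.ofReal N * lpN α β p Set.univ f) ^ p := ENNReal.rpow_le_rpow hb hp0.le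
      _ = ENNReal.ofReal N ^ p * (lpN α β p Set.univ f) ^ p :=
          ENNReal.mul_rpow_of_nonneg _ _ hp0.le
      _ = ENNReal.ofReal (N ^ p) * ((ENNReal.ofReal (Real.log M) ^ (1/p)) ^ p) := by
          rw [hlpf, ENNReal.ofReal_rpow_of_nonneg hN hp0.le]
      _ = ENNReal.ofReal (N ^ p) * ENNReal.ofReal (Real.log M) := by
          rw [← ENNReal.rpow_mul, one_div_mul_cancel hpne, ENNReal.rpow_one]
  have hlow : ENNReal.ofReal (J ^ p) * ENNReal.ofReal (Real.log (M * δ / R))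
      ≤ (lpN α β p Set.univ (Hop α β φ f)) ^ p := by
    have hpt : ∀ x ∈ Set.Icc R (M * δ), ENNReal.ofReal (J ^ p * x⁻¹)
        ≤ ENNReal.ofReal (|Hop α β φ f x| ^ p * Aw α β x) := by
      intro x hx
      have hx0 : 0 < x := lt_of_lt_of_le hR hx.1
      have hA : 0 < Aw α β x := Aw_pos α β hx0.ne'
      have hKnn : 0 ≤ x ^ (-(1/p)) * Aw α β x ^ (-(1/p)) :=
        mul_nonneg (Real.rpow_nonneg hx0.le _) (Real.rpow_nonneg hA.le _)
      have hKp : (x ^ (-(1/p)) * Aw α β x ^ (-(1/p))) ^ p = x⁻¹ * (Aw α β x)⁻¹ := by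
        rw [Real.mul_rpow (Real.rpow_nonneg hx0.le _) (Real.rpow_nonneg hA.le _),
          ← Real.rpow_mul hx0.le, ← Real.rpow_mul hA.le]
        have hpp : -(1/p) * p = -1 := by field_simp
        rw [hpp, Real.rpow_neg_one, Real.rpow_neg_one]
      have hlower := hop_lower hβ hα hp φ hφpos hφint hδ hδR hM hx
      apply ENNReal.ofReal_le_ofReal
      have habs : J * (x ^ (-(1/p)) * Aw α β x ^ (-(1/p))) ≤ |Hop α β φ f x| :=
        le_trans hlower (le_abs_self _)
      calc J ^ p * x⁻¹
          = (J * (x ^ (-(1/p)) * Aw α β x ^ (-(1/p)))) ^ p * Aw α β x := by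
            rw [Real.mul_rpow hJ0 hKnn, hKp]
            field_simp
        _ ≤ |Hop α β φ f x| ^ p * Aw α β x :=
            mul_le_mul_of_nonneg_right
              (Real.rpow_le_rpow (mul_nonneg hJ0 hKnn) habs hp0.le) (Aw_nonneg _ _ _)
    calc ENNReal.ofReal (J ^ p) * ENNReal.ofReal (Real.log (M * δ / R))
        = ENNReal.ofReal (J ^ p) * ∫⁻ x in Set.Icc R (M * δ), ENNReal.ofReal x⁻¹ := by
          rw [lintegral_inv_Icc hR hRM]
      _ = ∫⁻ x in Set.Icc R (M * δ), ENNReal.ofReal (J ^ p) * ENNReal.ofReal x⁻¹ :=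
          (lintegral_const_mul _ (ENNReal.measurable_ofReal.comp measurable_inv)).symm
      _ = ∫⁻ x in Set.Icc R (M * δ), ENNReal.ofReal (J ^ p * x⁻¹) := by
          apply lintegral_congr
          intro x
          rw [← ENNReal.ofReal_mul (by positivity)]
      _ ≤ ∫⁻ x in Set.Icc R (M * δ), ENNReal.ofReal (|Hop α β φ f x| ^ p * Aw α β x) :=
          setLIntegral_mono' measurableSet_Icc hpt
      _ ≤ ∫⁻ x, ENNReal.ofReal (|Hop α β φ f x| ^ p * Aw α β x) :=
          setLIntegral_le_lintegral _ _
      _ = (lpN α β p Set.univ (Hop α β φ f)) ^ p := by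
          rw [lpN, Measure.restrict_univ, ← ENNReal.rpow_mul, one_div_mul_cancel hpne,
            ENNReal.rpow_one]
  have hcomb : ENNReal.ofReal (J ^ p * Real.log (M * δ / R))
      ≤ ENNReal.ofReal (N ^ p * Real.log M) := by
    rw [ENNReal.ofReal_mul (by positivity), ENNReal.ofReal_mul (by positivity)]
    exact le_trans hlow hbp
  have hfin : 0 ≤ N ^ p * Real.log M := mul_nonneg (Real.rpow_nonneg hN _) (Real.log_nonneg hM)
  exact (ENNReal.ofReal_le_ofReal_iff hfin).1 hcomb

lemma key_est {α β : ℝ} (hβ : -(1/2 : ℝ) ≤ β) (hα : -(1/2 : ℝ) < α)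
    {p : ℝ} (hp : 1 < p) (φ : ℝ → ℝ) (hφpos : ∀ t, 0 ≤ φ t)
    (hφint : IntegrableOn φ (Set.Ioi 0)) {N : ℝ} (hN : 0 ≤ N)
    (hbdd : ∀ f : ℝ → ℝ, Measurable f → lpN α β p Set.univ f < ⊤ →
      lpN α β p Set.univ (Hop α β φ f) ≤ ENNReal.ofReal N * lpN α β p Set.univ f)
    {δ R : ℝ} (hδ : 0 < δ) (hδR : δ ≤ R) :
    ∫⁻ t in Set.Ioc δ R, ENNReal.ofReal (φ t / t * t ^ (1/p) * cfun α β t ^ (1 - 1/p))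
      ≤ ENNReal.ofReal N := by
  have hp0 : (0:ℝ) < p := by linarith
  have hpne : p ≠ 0 := hp0.ne'
  have hR : 0 < R := lt_of_lt_of_le hδ hδR
  have hwint := w_int hβ hα hp φ hφpos hφint hδ hδR
  have hwnn : 0 ≤ᵐ[volume.restrict (Set.Ioc δ R)]
      fun t => φ t / t * t ^ (1/p) * cfun α β t ^ (1 - 1/p) := by
    refine (ae_restrict_iff' measurableSet_Ioc).2 (Filter.Eventually.of_forall fun t ht => ?_)
    have ht0 : 0 < t := lt_trans hδ ht.1
    have h1 := hφpos t
    have h2 := cfun_nonneg α β t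
    positivity
  rw [← MeasureTheory.ofReal_integral_eq_lintegral_ofReal hwint hwnn]
  apply ENNReal.ofReal_le_ofReal
  set J : ℝ := ∫ t in Set.Ioc δ R, φ t / t * t ^ (1/p) * cfun α β t ^ (1 - 1/p) with hJ
  have h1 : ∀ n : ℕ, J ^ p ≤ N ^ p * (Real.log (R/δ) / ((n:ℝ)+1) + 1) := by
    intro n
    have hn1 : (0:ℝ) < (n:ℝ)+1 := by positivity
    set M : ℝ := R/δ * Real.exp ((n:ℝ)+1) with hMdef
    have hRδ1 : (1:ℝ) ≤ R/δ := (one_le_div hδ).2 hδR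
    have hexp1 : (1:ℝ) ≤ Real.exp ((n:ℝ)+1) := Real.one_le_exp (by positivity)
    have hM1 : (1:ℝ) ≤ M := by nlinarith
    have hMδR : M * δ / R = Real.exp ((n:ℝ)+1) := by
      rw [hMdef]
      field_simp
    have hRM : R ≤ M * δ := by
      have h3 : (1:ℝ) ≤ M * δ / R := hMδR ▸ hexp1
      exact (one_le_div hR).1 h3
    have hmain := main_est hβ hα hp φ hφpos hφint hN hbdd hδ hδR hM1 hRM
    rw [hMδR, Real.log_exp] at hmain
    have hlogM : Real.log M = Real.log (R/δ) + ((n:ℝ)+1) := by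
      rw [hMdef, Real.log_mul (by positivity : (0:ℝ) < R/δ).ne' (Real.exp_ne_zero _),
        Real.log_exp]
    rw [hlogM] at hmain
    have e2 : N ^ p * (Real.log (R/δ) + ((n:ℝ)+1)) / ((n:ℝ)+1)
        = N ^ p * (Real.log (R/δ) / ((n:ℝ)+1) + 1) := by
      field_simp
    calc J ^ p = J ^ p * ((n:ℝ)+1) / ((n:ℝ)+1) := by field_simp
      _ ≤ N ^ p * (Real.log (R/δ) + ((n:ℝ)+1)) / ((n:ℝ)+1) := by gcongr
      _ = N ^ p * (Real.log (R/δ) / ((n:ℝ)+1) + 1) := e2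
  have h2 : Filter.Tendsto (fun n : ℕ => N ^ p * (Real.log (R/δ) / ((n:ℝ)+1) + 1))
      Filter.atTop (nhds (N ^ p * (0 + 1))) := by
    apply Filter.Tendsto.const_mul
    apply Filter.Tendsto.add _ tendsto_const_nhds
    apply Filter.Tendsto.div_atTop tendsto_const_nhds
    exact Filter.tendsto_atTop_add_const_right _ 1 tendsto_natCast_atTop_atTop
  have hJp : J ^ p ≤ N ^ p := by
    have h3 : N ^ p * (0 + 1) = N ^ p := by ring
    rw [h3] at h2
    exact ge_of_tendsto' h2 h1
  by_contra hlt
  push_neg at hlt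
  exact absurd hJp (not_le.2 (Real.rpow_lt_rpow hN hlt hp0))

/-- Necessary condition for `L^p`-boundedness of the Hausdorff operator. -/
theorem hausdorff_Lp_necessary (α β : ℝ) (hβα : β ≤ α) (hβ : -(1/2 : ℝ) ≤ β)
    (hα : -(1/2 : ℝ) < α)
    (p : ℝ) (hp : 1 < p)
    (φ : ℝ → ℝ) (hφpos : ∀ t, 0 ≤ φ t) (hφint : IntegrableOn φ (Set.Ioi 0))
    (Ainf : ℝ≥0∞)
    (hA : Ainf = ∫⁻ t in Set.Ioi (0 : ℝ), ENNReal.ofReal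
      ((φ t / t) * t ^ (1/p) *
        (⨅ u : {u : ℝ // u ≠ 0}, Aw α β u.1 / Aw α β (t * u.1)) ^ (1 - 1/p)))
    (hApos : 0 < Ainf)
    (N : ℝ) (hN : 0 ≤ N)
    (hbdd : ∀ f : ℝ → ℝ, Measurable f → lpN α β p Set.univ f < ⊤ →
      lpN α β p Set.univ (Hop α β φ f) ≤ ENNReal.ofReal N * lpN α β p Set.univ f) :
    Ainf ≤ ENNReal.ofReal N := by
  rw [hA]
  set g : ℝ → ℝ≥0∞ := fun t => ENNReal.ofReal
      (φ t / t * t ^ (1/p) * cfun α β t ^ (1 - 1/p)) with hg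
  have hSn : ∀ n : ℕ, Set.Ioc (((n:ℝ)+1)⁻¹) ((n:ℝ)+1) ⊆ Set.Ioi (0:ℝ) :=
    fun n t ht => lt_trans (by positivity) ht.1
  set G : ℕ → ℝ → ℝ≥0∞ := fun n => (Set.Ioc (((n:ℝ)+1)⁻¹) ((n:ℝ)+1)).indicator g with hG
  have hGmeas : ∀ n, AEMeasurable (G n) volume := by
    intro n
    apply (aemeasurable_indicator_iff measurableSet_Ioc).2
    have h1 : AEMeasurable φ (volume.restrict (Set.Ioc (((n:ℝ)+1)⁻¹) ((n:ℝ)+1))) :=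
      hφint.aestronglyMeasurable.aemeasurable.mono_measure
        (Measure.restrict_mono (hSn n) le_rfl)
    have h2 := cfun_aesm hβ hα measurableSet_Ioc (hSn n)
    exact ENNReal.measurable_ofReal.comp_aemeasurable
      (((h1.div aemeasurable_id).mul
        ((measurable_id.pow_const (1/p)).aemeasurable)).mul (h2.pow_const (1 - 1/p)))
  have hmono : ∀ t, Monotone (fun n => G n t) := by
    intro t
    apply monotone_nat_of_le_succ
    intro n
    have hsub : Set.Ioc (((n:ℝ)+1)⁻¹) ((n:ℝ)+1)
        ⊆ Set.Ioc ((((n+1):ℕ):ℝ)+1)⁻¹ ((((n+1):ℕ):ℝ)+1) := by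
      apply Set.Ioc_subset_Ioc
      · apply inv_anti₀ (by positivity)
        push_cast; linarith
      · push_cast; linarith
    exact Set.indicator_le_indicator_of_subset hsub (fun a => zero_le) t
  have hsup : ∀ t, ⨆ n, G n t = (Set.Ioi (0:ℝ)).indicator g t := by
    intro t
    apply le_antisymm
    · exact iSup_le fun n =>
        Set.indicator_le_indicator_of_subset (hSn n) (fun a => zero_le) t
    · by_cases ht : t ∈ Set.Ioi (0:ℝ)
      · have ht0 : (0:ℝ) < t := ht
        obtain ⟨n, hn⟩ := exists_nat_gt (max t⁻¹ t)
        have h4 : t⁻¹ < (n:ℝ)+1 := lt_trans (lt_of_le_of_lt (le_max_left _ _) hn) (by linarith)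
        have h5 : t ≤ (n:ℝ)+1 := le_trans (le_trans (le_max_right t⁻¹ t) hn.le) (by linarith)
        have hmem : t ∈ Set.Ioc (((n:ℝ)+1)⁻¹) ((n:ℝ)+1) := by
          refine ⟨?_, h5⟩
          rw [inv_lt_comm₀ (by positivity) ht0]
          exact h4
        rw [Set.indicator_of_mem ht]
        refine le_trans (le_of_eq ?_) (le_iSup (fun n => G n t) n)
        rw [hG]
        simp only []
        rw [Set.indicator_of_mem hmem]
      · rw [Set.indicator_of_notMem ht]
        exact zero_le
  calc ∫⁻ t in Set.Ioi (0:ℝ), ENNReal.ofReal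
        ((φ t / t) * t ^ (1/p) *
          (⨅ u : {u : ℝ // u ≠ 0}, Aw α β u.1 / Aw α β (t * u.1)) ^ (1 - 1/p))
      = ∫⁻ t, (Set.Ioi (0:ℝ)).indicator g t := (lintegral_indicator measurableSet_Ioi g).symm
    _ = ∫⁻ t, ⨆ n, G n t := by
        apply lintegral_congr
        intro t
        rw [hsup]
    _ = ⨆ n, ∫⁻ t, G n t := lintegral_iSup' hGmeas (Filter.Eventually.of_forall hmono)
    _ ≤ ENNReal.ofReal N := by
        apply iSup_le
        intro n
        rw [hG]
        simp only []
        rw [lintegral_indicator measurableSet_Ioc]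
        have h1n : (1:ℝ) ≤ (n:ℝ)+1 := by
          have := Nat.cast_nonneg (α := ℝ) n
          linarith
        have h0n : (0:ℝ) < (n:ℝ)+1 := by positivity
        have e : ((n:ℝ)+1) * ((n:ℝ)+1)⁻¹ = 1 := mul_inv_cancel₀ h0n.ne'
        have h2n : ((n:ℝ)+1)⁻¹ ≤ (n:ℝ)+1 := by
          nlinarith [e, mul_le_mul_of_nonneg_left h1n (inv_nonneg.2 h0n.le)]
        exact key_est hβ hα hp φ hφpos hφint hN hbdd (by positivity) h2n
end

section
/- Let 1 < q < p < ∞ and let φ be a non-negative function with φ ∈ L^1(0,∞) such that C := ∫_0^∞ (φ(t)/t) · t^{1/q} · ( ∫_ℝ ( A_{α,β}(u)^{q - q/p} / A_{α,β}(tu)^{q-1} )^{p/(p-q)} du )^{(p-q)/(pq)} dt < ∞. Then the Hausdorff operator H_{α,β,φ} is bounded from L^p(ℝ, A_{α,β}) to L^q(ℝ, A_{α,β}), and for every f ∈ L^p(ℝ, A_{α,β}) one has ‖H_{α,β,φ} f‖_{L^q(ℝ,A_{α,β})} ≤ C · ‖f‖_{L^p(ℝ,A_{α,β})}. -/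
open MeasureTheory Set ENNReal

section Helpers
open Function

lemma my_iSup_rpow {ι : Type*} [Nonempty ι] (f : ι → ℝ≥0∞) {r : ℝ} (hr : 0 < r) :
    (⨆ n, f n) ^ r = ⨆ n, f n ^ r := by
  refine le_antisymm ?_ (iSup_le fun n => ENNReal.rpow_le_rpow (le_iSup f n) hr.le)
  have h1 : (⨆ n, f n) ≤ (⨆ n, f n ^ r) ^ (1/r) := by
    refine iSup_le fun n => ?_
    have : f n = (f n ^ r) ^ (1/r) := by
      rw [← ENNReal.rpow_mul, mul_one_div_cancel hr.ne', ENNReal.rpow_one]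
    rw [this]
    exact ENNReal.rpow_le_rpow (le_iSup (fun n => f n ^ r) n) (by positivity)
  calc (⨆ n, f n) ^ r ≤ ((⨆ n, f n ^ r) ^ (1/r)) ^ r := ENNReal.rpow_le_rpow h1 hr.le
    _ = ⨆ n, f n ^ r := by rw [← ENNReal.rpow_mul, one_div_mul_cancel hr.ne', ENNReal.rpow_one]

lemma my_rpow_eq_self_mul {a : ℝ≥0∞} {q : ℝ} (hq : 1 < q) : a ^ q = a * a ^ (q - 1) := by
  rcases eq_or_ne a 0 with rfl | h0
  · rw [ENNReal.zero_rpow_of_pos (by linarith), zero_mul]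
  rcases eq_or_ne a ⊤ with rfl | ht
  · rw [ENNReal.top_rpow_of_pos (by linarith), ENNReal.top_rpow_of_pos (by linarith),
      ENNReal.top_mul_top]
  · have h : a * a ^ (q - 1) = a ^ (1:ℝ) * a ^ (q - 1) := by rw [ENNReal.rpow_one]
    rw [h, ← ENNReal.rpow_add _ _ h0 ht]
    ring_nf

lemma minkowski_fin {A B : Type*} [MeasurableSpace A] [MeasurableSpace B]
    (μ : Measure A) (ν : Measure B) [SFinite μ] [SFinite ν]
    (g : A → B → ℝ≥0∞) (hg : Measurable (Function.uncurry g)) {q : ℝ} (hq : 1 < q)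
    (hfin : (∫⁻ x, (∫⁻ t, g t x ∂μ) ^ q ∂ν) ≠ ⊤) :
    (∫⁻ x, (∫⁻ t, g t x ∂μ) ^ q ∂ν) ^ (1/q) ≤
      ∫⁻ t, (∫⁻ x, g t x ^ q ∂ν) ^ (1/q) ∂μ := by
  have hq0 : (0:ℝ) < q := by linarith
  set S : B → ℝ≥0∞ := fun x => ∫⁻ t, g t x ∂μ with hSdef
  have hSm : Measurable S := Measurable.lintegral_prod_left hg
  set M : ℝ≥0∞ := ∫⁻ x, S x ^ q ∂ν with hMdef
  set R : ℝ≥0∞ := ∫⁻ t, (∫⁻ x, g t x ^ q ∂ν) ^ (1/q) ∂μ with hRdef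
  rcases eq_or_ne M 0 with hM0 | hM0
  · rw [hM0, ENNReal.zero_rpow_of_pos (by positivity)]; exact zero_le
  have hae : ∀ᵐ x ∂ν, S x ≠ ⊤ := by
    have h := ae_lt_top (hSm.pow_const q) hfin
    filter_upwards [h] with x hx
    intro hS
    rw [hS, ENNReal.top_rpow_of_pos hq0] at hx
    exact absurd hx (lt_irrefl _)
  have hgm : ∀ t, Measurable fun x => g t x := fun t =>
    hg.comp (measurable_const.prodMk measurable_id)
  have hgm' : ∀ x, Measurable fun t => g t x := fun x =>
    hg.comp (measurable_id.prodMk measurable_const)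
  have key : M ≤ R * M ^ (1 - 1/q) := by
    have step1 : M = ∫⁻ x, ∫⁻ t, g t x * S x ^ (q-1) ∂μ ∂ν := by
      refine lintegral_congr_ae (hae.mono fun x hx => ?_)
      show S x ^ q = ∫⁻ t, g t x * S x ^ (q-1) ∂μ
      rw [lintegral_mul_const' _ _ (ENNReal.rpow_ne_top_of_nonneg (by linarith) hx),
        ← my_rpow_eq_self_mul hq]
    have step2 : (∫⁻ x, ∫⁻ t, g t x * S x ^ (q-1) ∂μ ∂ν)
        = ∫⁻ t, ∫⁻ x, g t x * S x ^ (q-1) ∂ν ∂μ := by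
      apply lintegral_lintegral_swap
      exact ((hg.comp measurable_swap).mul
        ((hSm.comp measurable_fst).pow_const (q-1))).aemeasurable
    have step3 : (∫⁻ t, ∫⁻ x, g t x * S x ^ (q-1) ∂ν ∂μ)
        ≤ ∫⁻ t, (∫⁻ x, g t x ^ q ∂ν) ^ (1/q) * M ^ (1 - 1/q) ∂μ := by
      refine lintegral_mono fun t => ?_
      have heq : ∀ x, g t x * S x ^ (q-1)
          = (g t x ^ q) ^ (1/q) * (S x ^ q) ^ (1 - 1/q) := by
        intro x
        rw [← ENNReal.rpow_mul, ← ENNReal.rpow_mul, mul_one_div_cancel hq0.ne',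
          ENNReal.rpow_one]
        congr 1
        rw [show q * (1 - 1/q) = q - 1 by field_simp]
      calc ∫⁻ x, g t x * S x ^ (q-1) ∂ν
          = ∫⁻ x, (g t x ^ q) ^ (1/q) * (S x ^ q) ^ (1 - 1/q) ∂ν := by
            simp_rw [heq]
        _ ≤ (∫⁻ x, g t x ^ q ∂ν) ^ (1/q) * (∫⁻ x, S x ^ q ∂ν) ^ (1 - 1/q) :=
            lintegral_mul_norm_pow_le ((hgm t).pow_const q).aemeasurable
              ((hSm.pow_const q).aemeasurable) (by positivity)
              (by rw [sub_nonneg, div_le_one hq0]; linarith) (by ring)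
    have step4 : (∫⁻ t, (∫⁻ x, g t x ^ q ∂ν) ^ (1/q) * M ^ (1 - 1/q) ∂μ)
        = R * M ^ (1 - 1/q) :=
      lintegral_mul_const' _ _ (ENNReal.rpow_ne_top_of_nonneg
        (by rw [sub_nonneg, div_le_one hq0]; linarith) hfin)
    calc M = ∫⁻ x, ∫⁻ t, g t x * S x ^ (q-1) ∂μ ∂ν := step1
      _ = ∫⁻ t, ∫⁻ x, g t x * S x ^ (q-1) ∂ν ∂μ := step2
      _ ≤ ∫⁻ t, (∫⁻ x, g t x ^ q ∂ν) ^ (1/q) * M ^ (1 - 1/q) ∂μ := step3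
      _ = R * M ^ (1 - 1/q) := step4
  have hMsplit : M = M ^ (1/q) * M ^ (1 - 1/q) := by
    rw [← ENNReal.rpow_add _ _ hM0 hfin]
    norm_num
  nth_rewrite 1 [hMsplit] at key
  exact (ENNReal.mul_le_mul_iff_left
    ((ENNReal.rpow_pos (pos_iff_ne_zero.mpr hM0) hfin).ne')
    (ENNReal.rpow_ne_top_of_nonneg (by rw [sub_nonneg, div_le_one hq0]; linarith) hfin)).mp key

lemma minkowski_lint {A B : Type*} [MeasurableSpace A] [MeasurableSpace B]
    (μ : Measure A) (ν : Measure B) [SigmaFinite μ] [SigmaFinite ν]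
    (g : A → B → ℝ≥0∞) (hg : Measurable (Function.uncurry g)) {q : ℝ} (hq : 1 < q) :
    (∫⁻ x, (∫⁻ t, g t x ∂μ) ^ q ∂ν) ^ (1/q) ≤
      ∫⁻ t, (∫⁻ x, g t x ^ q ∂ν) ^ (1/q) ∂μ := by
  have hq0 : (0:ℝ) < q := by linarith
  set gN : ℕ → A → B → ℝ≥0∞ := fun n t x =>
    (spanningSets μ n).indicator 1 t * ((spanningSets ν n).indicator 1 x * min (g t x) n)
    with hgNdef
  have hgNm : ∀ n, Measurable (Function.uncurry (gN n)) := by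
    intro n
    exact ((measurable_const.indicator (measurableSet_spanningSets μ n)).comp
        measurable_fst).mul
      (((measurable_const.indicator (measurableSet_spanningSets ν n)).comp
        measurable_snd).mul (hg.min measurable_const))
  have hind1A : ∀ (s : Set A) (y : A), s.indicator (1 : A → ℝ≥0∞) y ≤ 1 :=
    fun s y => Set.indicator_le' (fun _ _ => le_rfl) (fun _ _ => zero_le_one) y
  have hind1B : ∀ (s : Set B) (y : B), s.indicator (1 : B → ℝ≥0∞) y ≤ 1 :=
    fun s y => Set.indicator_le' (fun _ _ => le_rfl) (fun _ _ => zero_le_one) y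
  have hle' : ∀ n t x, gN n t x ≤ min (g t x) n := by
    intro n t x
    calc gN n t x ≤ 1 * (1 * min (g t x) n) :=
        mul_le_mul' (hind1A _ _) (mul_le_mul' (hind1B _ _) le_rfl)
      _ = min (g t x) n := by rw [one_mul, one_mul]
  have hle : ∀ n t x, gN n t x ≤ g t x :=
    fun n t x => (hle' n t x).trans (min_le_left _ _)
  have hmono : ∀ t x, Monotone fun n => gN n t x := by
    intro t x n m hnm
    refine mul_le_mul' (Set.indicator_le_indicator_of_subset
        (monotone_spanningSets μ hnm) (fun _ => zero_le) t)
      (mul_le_mul' (Set.indicator_le_indicator_of_subset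
        (monotone_spanningSets ν hnm) (fun _ => zero_le) x)
        (min_le_min le_rfl (Nat.cast_le.mpr hnm)))
  have hsup : ∀ t x, (⨆ n, gN n t x) = g t x := by
    intro t x
    refine le_antisymm (iSup_le fun n => hle n t x) ?_
    obtain ⟨N1, hN1⟩ : ∃ n, t ∈ spanningSets μ n := by
      have : t ∈ ⋃ n, spanningSets μ n := by rw [iUnion_spanningSets]; trivial
      exact mem_iUnion.mp this
    obtain ⟨N2, hN2⟩ : ∃ n, x ∈ spanningSets ν n := by
      have : x ∈ ⋃ n, spanningSets ν n := by rw [iUnion_spanningSets]; trivial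
      exact mem_iUnion.mp this
    have hmin : ∀ m : ℕ, min (g t x) m ≤ ⨆ n, gN n t x := by
      intro m
      refine le_iSup_of_le (max (max N1 N2) m) ?_
      have ht' : t ∈ spanningSets μ (max (max N1 N2) m) :=
        monotone_spanningSets μ (le_trans (le_max_left _ _) (le_max_left _ _)) hN1
      have hx' : x ∈ spanningSets ν (max (max N1 N2) m) :=
        monotone_spanningSets ν (le_trans (le_max_right _ _) (le_max_left _ _)) hN2
      show (spanningSets μ _).indicator 1 t * ((spanningSets ν _).indicator 1 x *
          min (g t x) _) ≥ _
      rw [Set.indicator_of_mem ht', Set.indicator_of_mem hx']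
      simp only [Pi.one_apply, one_mul]
      exact min_le_min le_rfl (Nat.cast_le.mpr (le_max_right _ _))
    rcases eq_or_ne (g t x) ⊤ with htop | hne
    · rw [htop]
      have h2 : ∀ m : ℕ, (m : ℝ≥0∞) ≤ ⨆ n, gN n t x := by
        intro m
        refine le_trans ?_ (hmin m)
        rw [htop, min_eq_right le_top]
      calc (⊤ : ℝ≥0∞) = ⨆ m : ℕ, (m : ℝ≥0∞) := ENNReal.iSup_natCast.symm
        _ ≤ ⨆ n, gN n t x := iSup_le h2
    · obtain ⟨m, hm⟩ := ENNReal.exists_nat_gt hne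
      calc g t x = min (g t x) m := (min_eq_left hm.le).symm
        _ ≤ ⨆ n, gN n t x := hmin m
  -- finiteness of truncated M
  have hMNfin : ∀ n, (∫⁻ x, (∫⁻ t, gN n t x ∂μ) ^ q ∂ν) ≠ ⊤ := by
    intro n
    set c : ℝ≥0∞ := n * μ (spanningSets μ n) with hcdef
    have hcne : c ≠ ⊤ :=
      ENNReal.mul_ne_top (natCast_ne_top n) (measure_spanningSets_lt_top μ n).ne
    have hSle : ∀ x, (∫⁻ t, gN n t x ∂μ) ≤ c := by
      intro x
      calc (∫⁻ t, gN n t x ∂μ)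
          ≤ ∫⁻ t, (spanningSets μ n).indicator (fun _ => (n : ℝ≥0∞)) t ∂μ := by
            refine lintegral_mono fun t => ?_
            rcases em (t ∈ spanningSets μ n) with ht | ht
            · rw [Set.indicator_of_mem ht]
              exact (hle' n t x).trans (min_le_right _ _)
            · show (spanningSets μ n).indicator 1 t * _ ≤ _
              rw [Set.indicator_of_notMem ht, zero_mul]
              exact zero_le
        _ = c := by rw [lintegral_indicator_const (measurableSet_spanningSets μ n), hcdef]
    have hSzero : ∀ x, x ∉ spanningSets ν n → (∫⁻ t, gN n t x ∂μ) = 0 := by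
      intro x hx
      have : ∀ t, gN n t x = 0 := by
        intro t
        show (spanningSets μ n).indicator 1 t * ((spanningSets ν n).indicator 1 x *
          min (g t x) n) = 0
        rw [Set.indicator_of_notMem hx, zero_mul, mul_zero]
      simp only [this, lintegral_zero]
    have : (∫⁻ x, (∫⁻ t, gN n t x ∂μ) ^ q ∂ν)
        ≤ ∫⁻ x, (spanningSets ν n).indicator (fun _ => c ^ q) x ∂ν := by
      refine lintegral_mono fun x => ?_
      rcases em (x ∈ spanningSets ν n) with hx | hx
      · rw [Set.indicator_of_mem hx]
        exact ENNReal.rpow_le_rpow (hSle x) hq0.le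
      · rw [Set.indicator_of_notMem hx, hSzero x hx,
          ENNReal.zero_rpow_of_pos hq0]
    refine ne_top_of_le_ne_top ?_ this
    rw [lintegral_indicator_const (measurableSet_spanningSets ν n)]
    exact ENNReal.mul_ne_top (ENNReal.rpow_ne_top_of_nonneg hq0.le hcne)
      (measure_spanningSets_lt_top ν n).ne
  -- convergence
  have hgNtm : ∀ n x, Measurable fun t => gN n t x := fun n x =>
    (hgNm n).comp (measurable_id.prodMk measurable_const)
  have hSN : ∀ x, (∫⁻ t, g t x ∂μ) = ⨆ n, ∫⁻ t, gN n t x ∂μ := by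
    intro x
    rw [← lintegral_iSup (fun n => hgNtm n x) (fun n m hnm t => hmono t x hnm)]
    exact lintegral_congr fun t => (hsup t x).symm
  have hSNm : ∀ n, Measurable fun x => ∫⁻ t, gN n t x ∂μ := fun n =>
    Measurable.lintegral_prod_left (hgNm n)
  have hSNmono : Monotone fun n => fun x => (∫⁻ t, gN n t x ∂μ) ^ q := by
    intro n m hnm x
    exact ENNReal.rpow_le_rpow (lintegral_mono fun t => hmono t x hnm) hq0.le
  have hM : (∫⁻ x, (∫⁻ t, g t x ∂μ) ^ q ∂ν)
      = ⨆ n, ∫⁻ x, (∫⁻ t, gN n t x ∂μ) ^ q ∂ν := by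
    rw [← lintegral_iSup (fun n => (hSNm n).pow_const q) hSNmono]
    refine lintegral_congr fun x => ?_
    rw [hSN x, my_iSup_rpow _ hq0]
  rw [hM, my_iSup_rpow _ (by positivity : (0:ℝ) < 1/q)]
  refine iSup_le fun n => ?_
  refine le_trans (minkowski_fin μ ν (gN n) (hgNm n) hq (hMNfin n)) ?_
  refine lintegral_mono fun t => ?_
  exact ENNReal.rpow_le_rpow (lintegral_mono fun x =>
    ENNReal.rpow_le_rpow (hle n t x) hq0.le) (by positivity)

end Helpers

/-- Sufficient condition for `L^p → L^q`-boundedness of the Hausdorff operator. -/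
theorem hausdorff_Lp_Lq_bounded (α β : ℝ) (hβα : β ≤ α) (hβ : -(1/2 : ℝ) ≤ β)
    (hα : -(1/2 : ℝ) < α)
    (p q : ℝ) (hq : 1 < q) (hqp : q < p)
    (φ : ℝ → ℝ) (hφpos : ∀ t, 0 ≤ φ t) (hφint : IntegrableOn φ (Set.Ioi 0))
    (Cpq : ℝ≥0∞)
    (hC : Cpq = ∫⁻ t in Set.Ioi (0 : ℝ),
      ENNReal.ofReal ((φ t / t) * t ^ (1/q)) *
        (∫⁻ u : ℝ, ENNReal.ofReal
          ((Aw α β u ^ (q - q/p) / Aw α β (t * u) ^ (q - 1)) ^ (p / (p - q)))) ^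
          ((p - q) / (p * q)))
    (hCfin : Cpq < ⊤)
    (f : ℝ → ℝ) (hf : Measurable f) (hfLp : lpN α β p Set.univ f < ⊤) :
    lpN α β q Set.univ (Hop α β φ f) ≤ Cpq * lpN α β p Set.univ f := by
  have hq0 : (0:ℝ) < q := by linarith
  have hp0 : (0:ℝ) < p := by linarith
  have hpq0 : (0:ℝ) < p - q := by linarith
  -- measurable representative of φ
  set φ' : ℝ → ℝ := fun t => max (hφint.aestronglyMeasurable.mk φ t) 0 with hφ'def
  have hφ'm : Measurable φ' :=
    hφint.aestronglyMeasurable.stronglyMeasurable_mk.measurable.max measurable_const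
  have hφ'nn : ∀ t, 0 ≤ φ' t := fun t => le_max_right _ _
  have hφeq : φ =ᵐ[volume.restrict (Set.Ioi 0)] φ' := by
    filter_upwards [hφint.aestronglyMeasurable.ae_eq_mk] with t ht
    rw [hφ'def]
    simp only [← ht, max_eq_left (hφpos t)]
  -- basic facts about the weight
  have hAwm : Measurable (Aw α β) := by
    unfold Aw
    exact ((Real.measurable_sinh.comp measurable_abs).pow measurable_const).mul
      ((Real.measurable_cosh.comp measurable_abs).pow measurable_const)
  have hAwnn : ∀ x, 0 ≤ Aw α β x := fun x =>
    mul_nonneg (Real.rpow_nonneg (by positivity) _)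
      (Real.rpow_nonneg (Real.cosh_pos _).le _)
  have hAwpos : ∀ x : ℝ, x ≠ 0 → 0 < Aw α β x := fun x hx =>
    mul_pos (Real.rpow_pos_of_pos (by positivity) _)
      (Real.rpow_pos_of_pos (Real.cosh_pos _) _)
  set W : ℝ → ℝ≥0∞ := fun x => ENNReal.ofReal (Aw α β x) with hWdef
  have hWm : Measurable W := hAwm.ennreal_ofReal
  set Np : ℝ≥0∞ := lpN α β p Set.univ f with hNpdef
  set μ : Measure ℝ := volume.restrict (Set.Ioi 0) with hμdef
  set g : ℝ → ℝ → ℝ≥0∞ := fun t x =>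
    ENNReal.ofReal (φ' t / t) * ENNReal.ofReal |f (x/t)| *
      ENNReal.ofReal (Aw α β (x/t) / Aw α β x) * (W x) ^ (1/q) with hgdef
  have hgm : Measurable (Function.uncurry g) := by
    apply Measurable.mul
    apply Measurable.mul (f := fun a : ℝ × ℝ => ENNReal.ofReal (φ' a.1 / a.1) * ENNReal.ofReal |f (a.2 / a.1)|)
    apply Measurable.mul (f := fun a : ℝ × ℝ => ENNReal.ofReal (φ' a.1 / a.1))
    · exact ((hφ'm.comp measurable_fst).div measurable_fst).ennreal_ofReal
    · exact ((hf.comp (measurable_snd.div measurable_fst)).abs).ennreal_ofReal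
    · exact ((hAwm.comp (measurable_snd.div measurable_fst)).div
        (hAwm.comp measurable_snd)).ennreal_ofReal
    · exact (hWm.comp measurable_snd).pow_const _
  -- kernel for the constant
  set K : ℝ → ℝ≥0∞ := fun t => ∫⁻ u : ℝ, ENNReal.ofReal
      ((Aw α β u ^ (q - q/p) / Aw α β (t * u) ^ (q - 1)) ^ (p / (p - q))) with hKdef
  -- Step 1 : pointwise bound
  have step1 : ∀ x, ENNReal.ofReal (|Hop α β φ f x| ^ q * Aw α β x)
      ≤ (∫⁻ t, g t x ∂μ) ^ q := by
    intro x
    have hWq : ((W x) ^ (1/q)) ^ q = W x := by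
      rw [← ENNReal.rpow_mul, one_div_mul_cancel hq0.ne', ENNReal.rpow_one]
    have hWne : (W x) ^ (1/q) ≠ ⊤ :=
      ENNReal.rpow_ne_top_of_nonneg (by positivity) ENNReal.ofReal_ne_top
    have hsplit : ∫⁻ t, g t x ∂μ
        = (∫⁻ t, ENNReal.ofReal (φ' t / t) * ENNReal.ofReal |f (x/t)| *
            ENNReal.ofReal (Aw α β (x/t) / Aw α β x) ∂μ) * (W x) ^ (1/q) :=
      lintegral_mul_const' _ _ hWne
    rw [ENNReal.ofReal_mul (by positivity),
      ← ENNReal.ofReal_rpow_of_nonneg (abs_nonneg _) hq0.le, hsplit,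
      ENNReal.mul_rpow_of_nonneg _ _ hq0.le, hWq]
    refine mul_le_mul' (ENNReal.rpow_le_rpow ?_ hq0.le) le_rfl
    rw [← Real.enorm_eq_ofReal_abs, Hop]
    refine le_trans (enorm_integral_le_lintegral_enorm _) (lintegral_mono_ae ?_)
    filter_upwards [hφeq, ae_restrict_mem measurableSet_Ioi] with t htφ ht
    have ht0 : (0:ℝ) < t := ht
    rw [Real.enorm_eq_ofReal_abs, abs_mul, abs_mul,
      abs_of_nonneg (div_nonneg (hφpos t) ht0.le),
      abs_of_nonneg (div_nonneg (hAwnn _) (hAwnn _)),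
      ENNReal.ofReal_mul (mul_nonneg (div_nonneg (hφpos t) ht0.le) (abs_nonneg _)),
      ENNReal.ofReal_mul (div_nonneg (hφpos t) ht0.le), htφ]
  -- Step 2 : Minkowski
  have step2 : lpN α β q Set.univ (Hop α β φ f)
      ≤ ∫⁻ t, (∫⁻ x, g t x ^ q) ^ (1/q) ∂μ := by
    calc lpN α β q Set.univ (Hop α β φ f)
        = (∫⁻ x, ENNReal.ofReal (|Hop α β φ f x| ^ q * Aw α β x)) ^ (1/q) := by
          rw [lpN, Measure.restrict_univ]
      _ ≤ (∫⁻ x, (∫⁻ t, g t x ∂μ) ^ q) ^ (1/q) :=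
          ENNReal.rpow_le_rpow (lintegral_mono step1) (by positivity)
      _ ≤ ∫⁻ t, (∫⁻ x, g t x ^ q) ^ (1/q) ∂μ := minkowski_lint μ volume g hgm hq
  -- Step 3 : per-t estimate
  have step3 : ∀ t : ℝ, t ∈ Set.Ioi (0:ℝ) →
      (∫⁻ x, g t x ^ q) ^ (1/q)
        ≤ ENNReal.ofReal ((φ' t / t) * t ^ (1/q)) * K t ^ ((p - q) / (p * q)) * Np := by
    intro t ht
    have ht0 : (0:ℝ) < t := ht
    have htne : t ≠ 0 := ht0.ne'
    set c : ℝ≥0∞ := ENNReal.ofReal (φ' t / t) with hcdef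
    have hcne : c ≠ ⊤ := ENNReal.ofReal_ne_top
    have hae0 : ∀ᵐ x : ℝ ∂(volume : Measure ℝ), x ≠ 0 := by
      refine ae_iff.mpr ?_
      have : {a : ℝ | ¬a ≠ 0} = {0} := by ext a; simp
      rw [this]
      exact measure_singleton 0
    -- pointwise identity
    have hptwise : ∀ x : ℝ, x ≠ 0 → g t x ^ q
        = c ^ q * (ENNReal.ofReal |f (x/t)| ^ q * W (x/t) ^ q * W x ^ (1 - q)) := by
      intro x hx
      have hWx0 : W x ≠ 0 := by
        simp only [hWdef, ne_eq, ENNReal.ofReal_eq_zero, not_le]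
        exact hAwpos x hx
      have hWxt : W x ≠ ⊤ := ENNReal.ofReal_ne_top
      have hWq : (W x ^ (1/q)) ^ q = W x := by
        rw [← ENNReal.rpow_mul, one_div_mul_cancel hq0.ne', ENNReal.rpow_one]
      have hd : ENNReal.ofReal (Aw α β (x/t) / Aw α β x) ^ q * W x
          = W (x/t) ^ q * W x ^ (1 - q) := by
        have h1 : W x ^ (-q) * W x = W x ^ (1 - q) := by
          have h2 := ENNReal.rpow_add (-q) 1 hWx0 hWxt
          rw [ENNReal.rpow_one] at h2
          rw [← h2]
          congr 1
          ring
        rw [ENNReal.ofReal_div_of_pos (hAwpos x hx),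
          ENNReal.div_rpow_of_nonneg _ _ hq0.le, div_eq_mul_inv,
          ← ENNReal.rpow_neg, mul_assoc, h1]
      show (c * ENNReal.ofReal |f (x/t)| * ENNReal.ofReal (Aw α β (x/t) / Aw α β x) *
          W x ^ (1/q)) ^ q = _
      rw [ENNReal.mul_rpow_of_nonneg _ _ hq0.le, ENNReal.mul_rpow_of_nonneg _ _ hq0.le,
        ENNReal.mul_rpow_of_nonneg _ _ hq0.le, hWq]
      calc c ^ q * ENNReal.ofReal |f (x/t)| ^ q *
            ENNReal.ofReal (Aw α β (x/t) / Aw α β x) ^ q * W x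
          = c ^ q * ENNReal.ofReal |f (x/t)| ^ q *
            (ENNReal.ofReal (Aw α β (x/t) / Aw α β x) ^ q * W x) := by ring
        _ = c ^ q * ENNReal.ofReal |f (x/t)| ^ q * (W (x/t) ^ q * W x ^ (1 - q)) := by
            rw [hd]
        _ = c ^ q * (ENNReal.ofReal |f (x/t)| ^ q * W (x/t) ^ q * W x ^ (1 - q)) := by ring
    -- the substituted integrand
    set Φ : ℝ → ℝ≥0∞ := fun x =>
      ENNReal.ofReal |f (x/t)| ^ q * W (x/t) ^ q * W x ^ (1 - q) with hΦdef
    have hΦm : Measurable Φ := by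
      exact (((hf.comp (measurable_id.div_const t)).abs.ennreal_ofReal.pow_const q).mul
        ((hWm.comp (measurable_id.div_const t)).pow_const q)).mul (hWm.pow_const (1-q))
    have hint1 : ∫⁻ x, g t x ^ q = c ^ q * ∫⁻ x, Φ x := by
      rw [← lintegral_const_mul' _ _ (ENNReal.rpow_ne_top_of_nonneg hq0.le hcne)]
      refine lintegral_congr_ae ?_
      filter_upwards [hae0] with x hx using hptwise x hx
    -- change of variables
    have hcov : (∫⁻ x, Φ x) = ENNReal.ofReal t * ∫⁻ u, Φ (t * u) := by
      have h1 : (∫⁻ u, Φ (t*u)) = ENNReal.ofReal |t⁻¹| * ∫⁻ x, Φ x := by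
        rw [← lintegral_map hΦm (measurable_const_mul t), Real.map_volume_mul_left htne,
          lintegral_smul_measure, smul_eq_mul]
      rw [h1, ← mul_assoc, ← ENNReal.ofReal_mul ht0.le, abs_of_pos (inv_pos.mpr ht0),
        mul_inv_cancel₀ htne, ENNReal.ofReal_one, one_mul]
    have hΦsub : ∀ u : ℝ, Φ (t * u)
        = ENNReal.ofReal |f u| ^ q * W u ^ q * W (t*u) ^ (1 - q) := by
      intro u
      simp only [hΦdef]
      rw [mul_div_cancel_left₀ _ htne]
    -- Hölder
    set X : ℝ → ℝ≥0∞ := fun u => ENNReal.ofReal |f u| ^ p * W u with hXdef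
    set Y : ℝ → ℝ≥0∞ := fun u =>
      (W u ^ (q - q/p) * W (t*u) ^ (1-q)) ^ (p/(p-q)) with hYdef
    have hXm : Measurable X := (hf.abs.ennreal_ofReal.pow_const p).mul hWm
    have hYm : Measurable Y := ((hWm.pow_const _).mul
      ((hWm.comp (measurable_const_mul t)).pow_const _)).pow_const _
    have hXY : ∀ u : ℝ, ENNReal.ofReal |f u| ^ q * W u ^ q * W (t*u) ^ (1 - q)
        = X u ^ (q/p) * Y u ^ ((p-q)/p) := by
      intro u
      have h1 : X u ^ (q/p) = ENNReal.ofReal |f u| ^ q * W u ^ (q/p) := by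
        rw [hXdef, ENNReal.mul_rpow_of_nonneg _ _ (by positivity),
          ← ENNReal.rpow_mul]
        congr 2
        field_simp
      have h2 : Y u ^ ((p-q)/p) = W u ^ (q - q/p) * W (t*u) ^ (1-q) := by
        rw [hYdef, ← ENNReal.rpow_mul]
        rw [show (p/(p-q)) * ((p-q)/p) = 1 by field_simp]
        rw [ENNReal.rpow_one]
      have h3 : W u ^ q = W u ^ (q/p) * W u ^ (q - q/p) := by
        rcases eq_or_ne (W u) 0 with h | h
        · rw [h, ENNReal.zero_rpow_of_pos hq0, ENNReal.zero_rpow_of_pos (by positivity),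
            zero_mul]
        · rw [← ENNReal.rpow_add _ _ h ENNReal.ofReal_ne_top]
          congr 1
          ring
      rw [h1, h2, h3]
      ring
    have hhold : (∫⁻ u, X u ^ (q/p) * Y u ^ ((p-q)/p))
        ≤ (∫⁻ u, X u) ^ (q/p) * (∫⁻ u, Y u) ^ ((p-q)/p) :=
      lintegral_mul_norm_pow_le hXm.aemeasurable hYm.aemeasurable
        (by positivity) (by positivity)
        (by field_simp; ring)
    have hX : (∫⁻ u, X u) = Np ^ p := by
      have h1 : (∫⁻ u, X u) = ∫⁻ x in Set.univ, ENNReal.ofReal (|f x| ^ p * Aw α β x) := by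
        rw [Measure.restrict_univ]
        refine lintegral_congr fun u => ?_
        rw [ENNReal.ofReal_mul (by positivity),
          ← ENNReal.ofReal_rpow_of_nonneg (abs_nonneg _) hp0.le]
      rw [h1, hNpdef, lpN, ← ENNReal.rpow_mul, one_div_mul_cancel hp0.ne',
        ENNReal.rpow_one]
    have hY : (∫⁻ u, Y u) = K t := by
      refine lintegral_congr_ae ?_
      filter_upwards [hae0] with u hu
      have htu : t * u ≠ 0 := mul_ne_zero htne hu
      have h1 : W u ^ (q - q/p) = ENNReal.ofReal (Aw α β u ^ (q - q/p)) :=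
        ENNReal.ofReal_rpow_of_pos (hAwpos u hu)
      have h2 : W (t*u) ^ (1-q) = (ENNReal.ofReal (Aw α β (t*u) ^ (q-1)))⁻¹ := by
        rw [show (1-q : ℝ) = -(q-1) by ring, ENNReal.rpow_neg,
          ENNReal.ofReal_rpow_of_pos (hAwpos _ htu)]
      show (W u ^ (q - q/p) * W (t*u) ^ (1-q)) ^ (p/(p-q)) = _
      rw [h1, h2, ← div_eq_mul_inv,
        ← ENNReal.ofReal_div_of_pos (Real.rpow_pos_of_pos (hAwpos _ htu) _),
        ENNReal.ofReal_rpow_of_nonneg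
          (div_nonneg (Real.rpow_nonneg (hAwnn u) _) (Real.rpow_nonneg (hAwnn _) _))
          (by positivity)]
    -- combine
    have hfinal : (∫⁻ x, g t x ^ q)
        ≤ c ^ q * ENNReal.ofReal t * Np ^ q * K t ^ ((p-q)/p) := by
      calc (∫⁻ x, g t x ^ q) = c ^ q * (ENNReal.ofReal t * ∫⁻ u, Φ (t * u)) := by
            rw [hint1, hcov]
        _ = c ^ q * (ENNReal.ofReal t * ∫⁻ u, X u ^ (q/p) * Y u ^ ((p-q)/p)) := by
            congr 2
            refine lintegral_congr fun u => ?_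
            rw [hΦsub u, hXY u]
        _ ≤ c ^ q * (ENNReal.ofReal t * ((∫⁻ u, X u) ^ (q/p) * (∫⁻ u, Y u) ^ ((p-q)/p))) :=
            mul_le_mul' le_rfl (mul_le_mul' le_rfl hhold)
        _ = c ^ q * ENNReal.ofReal t * Np ^ q * K t ^ ((p-q)/p) := by
            rw [hX, hY, ← ENNReal.rpow_mul]
            rw [show p * (q/p) = q by field_simp]
            ring
    calc (∫⁻ x, g t x ^ q) ^ (1/q)
        ≤ (c ^ q * ENNReal.ofReal t * Np ^ q * K t ^ ((p-q)/p)) ^ (1/q) :=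
          ENNReal.rpow_le_rpow hfinal (by positivity)
      _ = ENNReal.ofReal ((φ' t / t) * t ^ (1/q)) * K t ^ ((p - q) / (p * q)) * Np := by
          rw [ENNReal.mul_rpow_of_nonneg _ _ (by positivity : (0:ℝ) ≤ 1/q),
            ENNReal.mul_rpow_of_nonneg _ _ (by positivity : (0:ℝ) ≤ 1/q),
            ENNReal.mul_rpow_of_nonneg _ _ (by positivity : (0:ℝ) ≤ 1/q),
            ← ENNReal.rpow_mul c, mul_one_div_cancel hq0.ne', ENNReal.rpow_one,
            ← ENNReal.rpow_mul Np, mul_one_div_cancel hq0.ne', ENNReal.rpow_one,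
            ← ENNReal.rpow_mul (K t),
            show ((p-q)/p) * (1/q) = (p-q)/(p*q) by rw [div_mul_div_comm, mul_one],
            ENNReal.ofReal_rpow_of_pos ht0,
            ← ENNReal.ofReal_mul (div_nonneg (hφ'nn t) ht0.le)]
          ring
  -- Step 4 : conclusion
  have hNp_ne : Np ≠ ⊤ := hfLp.ne
  calc lpN α β q Set.univ (Hop α β φ f)
      ≤ ∫⁻ t, (∫⁻ x, g t x ^ q) ^ (1/q) ∂μ := step2
    _ ≤ ∫⁻ t, ENNReal.ofReal ((φ' t / t) * t ^ (1/q)) * K t ^ ((p - q) / (p * q)) * Np ∂μ := by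
        refine lintegral_mono_ae ?_
        filter_upwards [ae_restrict_mem measurableSet_Ioi] with t ht
        exact step3 t ht
    _ = (∫⁻ t, ENNReal.ofReal ((φ' t / t) * t ^ (1/q)) * K t ^ ((p - q) / (p * q)) ∂μ) * Np :=
        lintegral_mul_const' _ _ hNp_ne
    _ = Cpq * Np := by
        congr 1
        rw [hC]
        refine lintegral_congr_ae ?_
        filter_upwards [hφeq] with t ht
        rw [ht]
end

section
/- Let 1 < p < ∞ and let φ be a non-negative function with φ ∈ L^1(0,∞) and supp φ ⊆ [1,∞). If E(φ,p) < ∞, then the Hausdorff operator H_{α,β,φ} is bounded from L^p((0,1), A_{α,β}) to L^p((0,1), A_{α,β}), and for every f ∈ L^p((0,1), A_{α,β}) (extended by 0 outside (0,1)) one has ‖H_{α,β,φ} f‖_{L^p((0,1),A_{α,β})} ≤ A_{α,β}(1)^{1-1/p} · E(φ,p) · ‖f‖_{L^p((0,1),A_{α,β})}. -/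
open MeasureTheory Set ENNReal

lemma sinh_abs_nonneg (x : ℝ) : 0 ≤ Real.sinh |x| := by
  rw [← Real.sinh_zero]; exact Real.sinh_le_sinh.2 (abs_nonneg x)

lemma Aw_mono (α β : ℝ) (h2α : 0 ≤ 2*α+1) (h2β : 0 ≤ 2*β+1) {y z : ℝ} (h : |y| ≤ |z|) :
    Aw α β y ≤ Aw α β z := by
  unfold Aw
  apply mul_le_mul
  · exact Real.rpow_le_rpow (sinh_abs_nonneg y) (Real.sinh_le_sinh.2 h) h2α
  · exact Real.rpow_le_rpow (Real.cosh_pos _).le (Real.cosh_le_cosh.2 (by rwa [abs_abs, abs_abs])) h2β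
  · exact Real.rpow_nonneg (Real.cosh_pos _).le _
  · exact Real.rpow_nonneg (sinh_abs_nonneg z) _

lemma measurable_Aw (α β : ℝ) : Measurable (Aw α β) :=
  ((Real.continuous_sinh.comp continuous_abs).measurable.pow measurable_const).mul
    ((Real.continuous_cosh.comp continuous_abs).measurable.pow measurable_const)

lemma one_le_Aw_one (α β : ℝ) (h2α : 0 ≤ 2*α+1) (h2β : 0 ≤ 2*β+1) : 1 ≤ Aw α β 1 := by
  have hs : (1:ℝ) ≤ Real.sinh |1| := by
    rw [abs_one, Real.sinh_eq, Real.exp_neg]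
    nlinarith [Real.exp_one_gt_d9, Real.exp_pos 1,
      mul_inv_cancel₀ (ne_of_gt (Real.exp_pos 1)), inv_pos.2 (Real.exp_pos 1)]
  have h1 := Real.one_le_rpow hs h2α
  have hc : (1:ℝ) ≤ Real.cosh |1| := by rw [abs_one]; exact Real.one_le_cosh 1
  have h2 := Real.one_le_rpow hc h2β
  unfold Aw; nlinarith

lemma lintegral_Ioo_div_le (g : ℝ → ℝ≥0∞) (hg : Measurable g) {t : ℝ} (ht : 1 ≤ t) :
    ∫⁻ x in Ioo (0:ℝ) 1, g (x / t) ≤ ENNReal.ofReal t * ∫⁻ y in Ioo (0:ℝ) 1, g y := by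
  have ht0 : (0:ℝ) < t := lt_of_lt_of_le zero_lt_one ht
  have hpre : ((fun x : ℝ => t⁻¹ * x) ⁻¹' (Ioo 0 t⁻¹)) = Ioo (0:ℝ) 1 := by
    ext x
    simp only [mem_preimage, mem_Ioo]
    constructor <;> rintro ⟨h1, h2⟩ <;> constructor <;>
      nlinarith [inv_pos.2 ht0, mul_inv_cancel₀ ht0.ne']
  have h1 : ∫⁻ x in Ioo (0:ℝ) 1, g (x / t)
      = ∫⁻ y, g y ∂(Measure.map (fun x : ℝ => t⁻¹ * x) (volume.restrict (Ioo 0 1))) := by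
    rw [lintegral_map hg (measurable_const_mul _)]
    simp_rw [div_eq_inv_mul]
  have h2 : Measure.map (fun x : ℝ => t⁻¹ * x) (volume.restrict (Ioo 0 1))
      = (Measure.map (fun x : ℝ => t⁻¹ * x) volume).restrict (Ioo 0 t⁻¹) := by
    rw [Measure.restrict_map (measurable_const_mul _) measurableSet_Ioo, hpre]
  rw [h1, h2, Real.map_volume_mul_left (inv_ne_zero ht0.ne'), inv_inv, abs_of_pos ht0,
    Measure.restrict_smul, lintegral_smul_measure]
  exact mul_le_mul_right (lintegral_mono' (Measure.restrict_mono
    (Ioo_subset_Ioo_right (inv_le_one_of_one_le₀ ht)) le_rfl) le_rfl) _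

/-- If `E(φ,p) < ∞` then the Hausdorff operator is bounded on `L^p((0,1), A_{α,β})`. -/
theorem hausdorff_Lp_unit_interval_bounded (α β : ℝ) (hβα : β ≤ α) (hβ : -(1/2 : ℝ) ≤ β)
    (hα : -(1/2 : ℝ) < α)
    (p : ℝ) (hp : 1 < p)
    (φ : ℝ → ℝ) (hφpos : ∀ t, 0 ≤ φ t) (hφint : IntegrableOn φ (Set.Ioi 0))
    (hsupp : Function.support φ ⊆ Set.Ici 1)
    (Ep : ℝ≥0∞)
    (hE : Ep = ∫⁻ t in Set.Ioi (1 : ℝ), ENNReal.ofReal ((φ t / t) * t ^ (1/p)))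
    (hEfin : Ep < ⊤)
    (f : ℝ → ℝ) (hf : Measurable f) (hf0 : ∀ x, x ∉ Set.Ioo (0 : ℝ) 1 → f x = 0)
    (hfLp : lpN α β p (Set.Ioo 0 1) f < ⊤) :
    lpN α β p (Set.Ioo 0 1) (Hop α β φ f) ≤
      ENNReal.ofReal (Aw α β 1 ^ (1 - 1/p)) * Ep * lpN α β p (Set.Ioo 0 1) f := by
  have hp0 : (0:ℝ) < p := lt_trans zero_lt_one hp
  have hp0' : p ≠ 0 := hp0.ne'
  have h2α : (0:ℝ) ≤ 2*α + 1 := by linarith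
  have h2β : (0:ℝ) ≤ 2*β + 1 := by linarith
  set q : ℝ := p / (p - 1) with hq
  have hpq : p.HolderConjugate q := Real.HolderConjugate.conjExponent hp
  have hqp : 1/q * p = p - 1 := by
    rw [hq]; field_simp
  -- measurable nonnegative version of φ on (1,∞)
  obtain ⟨ψ0, hψ0m, hψ0e⟩ : ∃ ψ0, StronglyMeasurable ψ0 ∧ φ =ᵐ[volume.restrict (Ioi 0)] ψ0 :=
    ⟨_, hφint.aestronglyMeasurable.stronglyMeasurable_mk, hφint.aestronglyMeasurable.ae_eq_mk⟩
  set ψ : ℝ → ℝ := fun t => max (ψ0 t) 0 with hψdef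
  have hψm : Measurable ψ := hψ0m.measurable.max measurable_const
  have hψ_nonneg : ∀ t, 0 ≤ ψ t := fun t => le_max_right _ _
  have hres : volume.restrict (Ioi (1:ℝ)) ≤ volume.restrict (Ioi (0:ℝ)) :=
    Measure.restrict_mono (Ioi_subset_Ioi (by norm_num)) le_rfl
  have hψe : φ =ᵐ[volume.restrict (Ioi (1:ℝ))] ψ := by
    filter_upwards [hψ0e.filter_mono (ae_mono hres)] with t ht
    rw [hψdef]; simp only [← ht, max_eq_left (hφpos t)]
  set g : ℝ → ℝ≥0∞ := fun y => ENNReal.ofReal (|f y| ^ p * Aw α β y) with hgdef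
  have hgm : Measurable g := ((hf.abs.pow measurable_const).mul (measurable_Aw α β)).ennreal_ofReal
  set N : ℝ≥0∞ := ∫⁻ y in Ioo (0:ℝ) 1, g y with hNdef
  have hEψ : Ep = ∫⁻ t in Ioi (1:ℝ), ENNReal.ofReal (ψ t / t * t ^ (1/p)) := by
    rw [hE]; apply lintegral_congr_ae
    filter_upwards [hψe] with t ht; rw [ht]
  set C : ℝ → ℝ≥0∞ := fun t => ENNReal.ofReal (ψ t / t * t ^ (1/p - 1)) with hCdef
  have hCm : Measurable C := ((hψm.div measurable_id).mul (measurable_id.pow measurable_const)).ennreal_ofReal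
  have hA : ∀ x : ℝ, ENNReal.ofReal |Hop α β φ f x| ≤
      ∫⁻ t in Ioi (1:ℝ), ENNReal.ofReal (ψ t / t * |f (x/t)| * (Aw α β (x/t) / Aw α β x)) := by
    intro x
    have h1 : ENNReal.ofReal |Hop α β φ f x| ≤
        ∫⁻ t in Ioi (0:ℝ), ENNReal.ofReal |φ t / t * f (x/t) * (Aw α β (x/t) / Aw α β x)| := by
      rw [← Real.enorm_eq_ofReal_abs]
      refine le_trans (enorm_integral_le_lintegral_enorm _) (lintegral_mono fun t => ?_)
      rw [Real.enorm_eq_ofReal_abs]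
    refine h1.trans (le_of_eq ?_)
    have hsplit : Ioi (0:ℝ) = Ioo (0:ℝ) 1 ∪ Ici (1:ℝ) := (Set.Ioo_union_Ici_eq_Ioi zero_lt_one).symm
    rw [hsplit, lintegral_union measurableSet_Ici
      (Set.disjoint_left.mpr fun a ha hb => absurd hb (not_le.2 ha.2))]
    have hzero : (∫⁻ t in Ioo (0:ℝ) 1,
        ENNReal.ofReal |φ t / t * f (x/t) * (Aw α β (x/t) / Aw α β x)|) = 0 := by
      have hz : ∀ t ∈ Ioo (0:ℝ) 1,
          ENNReal.ofReal |φ t / t * f (x/t) * (Aw α β (x/t) / Aw α β x)|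
            = (fun _ => (0:ℝ≥0∞)) t := by
        intro t ht
        have hφ0 : φ t = 0 := by
          by_contra h
          exact absurd (hsupp (Function.mem_support.2 h)) (not_le.2 ht.2)
        simp [hφ0]
      rw [setLIntegral_congr_fun measurableSet_Ioo hz, lintegral_zero]
    rw [hzero, zero_add, ← setLIntegral_congr (Ioi_ae_eq_Ici (a := (1:ℝ)))]
    apply lintegral_congr_ae
    filter_upwards [hψe, ae_restrict_mem measurableSet_Ioi] with t hφψ ht
    have ht0 : (0:ℝ) < t := lt_trans zero_lt_one ht
    rw [abs_mul, abs_mul, abs_of_nonneg (div_nonneg (hφpos t) ht0.le),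
      abs_of_nonneg (div_nonneg (Aw_nonneg α β _) (Aw_nonneg α β _)), hφψ]
  have hB : ∀ x : ℝ, ENNReal.ofReal |Hop α β φ f x| ^ p ≤
      Ep ^ (p-1) * ∫⁻ t in Ioi (1:ℝ),
        ENNReal.ofReal (ψ t / t * t ^ (1/p)) *
          ENNReal.ofReal (|f (x/t)| * (Aw α β (x/t) / Aw α β x) * t ^ (-(1/p))) ^ p := by
    intro x
    set K : ℝ → ℝ≥0∞ := fun t => ENNReal.ofReal (ψ t / t * t ^ (1/p)) with hK
    set G : ℝ → ℝ≥0∞ :=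
      fun t => ENNReal.ofReal (|f (x/t)| * (Aw α β (x/t) / Aw α β x) * t ^ (-(1/p))) with hG
    have hKm : Measurable K :=
      ((hψm.div measurable_id).mul (measurable_id.pow measurable_const)).ennreal_ofReal
    have hGm : Measurable G :=
      ((((hf.comp (measurable_const.div measurable_id)).abs).mul
        (((measurable_Aw α β).comp (measurable_const.div measurable_id)).div measurable_const)).mul
        (measurable_id.pow measurable_const)).ennreal_ofReal
    have hptw : (∫⁻ t in Ioi (1:ℝ),
          ENNReal.ofReal (ψ t / t * |f (x/t)| * (Aw α β (x/t) / Aw α β x)))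
        = ∫⁻ t in Ioi (1:ℝ), ((fun t => K t ^ (1/q)) * fun t => K t ^ (1/p) * G t) t := by
      apply lintegral_congr_ae
      filter_upwards [ae_restrict_mem measurableSet_Ioi] with t ht
      have ht0 : (0:ℝ) < t := lt_trans zero_lt_one ht
      have hsum : 1/q + 1/p = 1 := by
        rw [one_div, one_div, add_comm]; exact hpq.inv_add_inv_eq_one
      have h1 : K t ^ (1/q) * (K t ^ (1/p) * G t) = K t * G t := by
        rw [← mul_assoc, ← ENNReal.rpow_add_of_nonneg _ _ hpq.symm.one_div_nonneg
          hpq.one_div_nonneg, hsum, ENNReal.rpow_one]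
      simp only [Pi.mul_apply]
      rw [h1, hK, hG, ← ENNReal.ofReal_mul (mul_nonneg (div_nonneg (hψ_nonneg t) ht0.le)
        (Real.rpow_nonneg ht0.le _))]
      congr 1
      have h2 : t ^ (1/p) * t ^ (-(1/p)) = 1 := by
        rw [← Real.rpow_add ht0]; simp
      have h3 : ψ t / t * t ^ (1/p) * (|f (x/t)| * (Aw α β (x/t) / Aw α β x) * t ^ (-(1/p)))
          = ψ t / t * |f (x/t)| * (Aw α β (x/t) / Aw α β x) * (t ^ (1/p) * t ^ (-(1/p))) := by
        ring
      rw [h3, h2, mul_one]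
    have hH : (∫⁻ t in Ioi (1:ℝ), ((fun t => K t ^ (1/q)) * fun t => K t ^ (1/p) * G t) t)
        ≤ (∫⁻ t in Ioi (1:ℝ), (K t ^ (1/q)) ^ q) ^ (1/q)
          * (∫⁻ t in Ioi (1:ℝ), (K t ^ (1/p) * G t) ^ p) ^ (1/p) :=
      ENNReal.lintegral_mul_le_Lp_mul_Lq (volume.restrict (Ioi (1:ℝ))) hpq.symm
        ((hKm.pow measurable_const).aemeasurable)
        (((hKm.pow measurable_const).mul hGm).aemeasurable)
    have e1 : (∫⁻ a in Ioi (1:ℝ), (K a ^ (1/q)) ^ q) = Ep := by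
      rw [hEψ]
      apply lintegral_congr; intro a
      rw [← ENNReal.rpow_mul, one_div_mul_cancel hpq.symm.ne_zero, ENNReal.rpow_one]
    have e2 : ∀ a : ℝ, (K a ^ (1/p) * G a) ^ p = K a * G a ^ p := fun a => by
      rw [ENNReal.mul_rpow_of_nonneg _ _ hp0.le, ← ENNReal.rpow_mul,
        one_div_mul_cancel hp0', ENNReal.rpow_one]
    have hstep : ENNReal.ofReal |Hop α β φ f x|
        ≤ Ep ^ (1/q) * (∫⁻ t in Ioi (1:ℝ), K t * G t ^ p) ^ (1/p) := by
      refine (hA x).trans ?_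
      rw [hptw]
      refine hH.trans (le_of_eq ?_)
      rw [e1]
      congr 2
      apply lintegral_congr; intro a; exact e2 a
    have h2 := ENNReal.rpow_le_rpow hstep hp0.le
    rw [ENNReal.mul_rpow_of_nonneg _ _ hp0.le, ← ENNReal.rpow_mul, ← ENNReal.rpow_mul, hqp,
      one_div_mul_cancel hp0', ENNReal.rpow_one] at h2
    exact h2
  have hkey : ∀ x ∈ Ioo (0:ℝ) 1, ENNReal.ofReal (|Hop α β φ f x| ^ p * Aw α β x) ≤
      Ep ^ (p-1) * ∫⁻ t in Ioi (1:ℝ), C t * g (x/t) := by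
    intro x hx
    have hx0 : (0:ℝ) < x := hx.1
    have hAx : 0 < Aw α β x := Aw_pos α β hx0.ne'
    have hawsplit : ENNReal.ofReal (|Hop α β φ f x| ^ p * Aw α β x)
        = ENNReal.ofReal |Hop α β φ f x| ^ p * ENNReal.ofReal (Aw α β x) := by
      rw [ENNReal.ofReal_mul (Real.rpow_nonneg (abs_nonneg _) _),
        ← ENNReal.ofReal_rpow_of_nonneg (abs_nonneg _) hp0.le]
    rw [hawsplit]
    calc ENNReal.ofReal |Hop α β φ f x| ^ p * ENNReal.ofReal (Aw α β x)
        ≤ (Ep ^ (p-1) * ∫⁻ t in Ioi (1:ℝ),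
            ENNReal.ofReal (ψ t / t * t ^ (1/p)) *
              ENNReal.ofReal (|f (x/t)| * (Aw α β (x/t) / Aw α β x) * t ^ (-(1/p))) ^ p)
            * ENNReal.ofReal (Aw α β x) := mul_le_mul_left (hB x) _
      _ = Ep ^ (p-1) * ∫⁻ t in Ioi (1:ℝ),
            (ENNReal.ofReal (ψ t / t * t ^ (1/p)) *
              ENNReal.ofReal (|f (x/t)| * (Aw α β (x/t) / Aw α β x) * t ^ (-(1/p))) ^ p)
              * ENNReal.ofReal (Aw α β x) := by
          rw [mul_assoc, ← lintegral_mul_const' _ _ ENNReal.ofReal_ne_top]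
      _ ≤ Ep ^ (p-1) * ∫⁻ t in Ioi (1:ℝ), C t * g (x/t) := by
          refine mul_le_mul_right (lintegral_mono_ae
            ((ae_restrict_iff' measurableSet_Ioi).2 (ae_of_all _ fun t ht => ?_))) _
          have ht1 : (1:ℝ) < t := ht
          have ht0 : (0:ℝ) < t := lt_trans zero_lt_one ht1
          have hxt0 : 0 < x / t := div_pos hx0 ht0
          have hAxt : 0 < Aw α β (x/t) := Aw_pos α β hxt0.ne'
          have hR0 : 0 < Aw α β (x/t) / Aw α β x := div_pos hAxt hAx
          have hR1 : Aw α β (x/t) / Aw α β x ≤ 1 := by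
            rw [div_le_one hAx]
            refine Aw_mono α β h2α h2β ?_
            rw [abs_of_pos hxt0, abs_of_pos hx0]
            exact div_le_self hx0.le ht1.le
          have hRp : (Aw α β (x/t) / Aw α β x) ^ p ≤ Aw α β (x/t) / Aw α β x := by
            calc (Aw α β (x/t) / Aw α β x) ^ p ≤ (Aw α β (x/t) / Aw α β x) ^ (1:ℝ) :=
                Real.rpow_le_rpow_of_exponent_ge hR0 hR1 hp.le
              _ = _ := Real.rpow_one _
          have hb0 : 0 ≤ |f (x/t)| * (Aw α β (x/t) / Aw α β x) * t ^ (-(1/p)) :=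
            mul_nonneg (mul_nonneg (abs_nonneg _) hR0.le) (Real.rpow_nonneg ht0.le _)
          have ha0 : 0 ≤ ψ t / t * t ^ (1/p) :=
            mul_nonneg (div_nonneg (hψ_nonneg t) ht0.le) (Real.rpow_nonneg ht0.le _)
          have hprod : (|f (x/t)| * (Aw α β (x/t) / Aw α β x) * t ^ (-(1/p))) ^ p
              = |f (x/t)| ^ p * (Aw α β (x/t) / Aw α β x) ^ p * t⁻¹ := by
            rw [Real.mul_rpow (mul_nonneg (abs_nonneg _) hR0.le) (Real.rpow_nonneg ht0.le _),
              Real.mul_rpow (abs_nonneg _) hR0.le, ← Real.rpow_mul ht0.le]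
            have he : -(1/p) * p = -1 := by field_simp
            rw [he, Real.rpow_neg_one]
          have hcore : (Aw α β (x/t) / Aw α β x) ^ p * Aw α β x ≤ Aw α β (x/t) := by
            calc (Aw α β (x/t) / Aw α β x) ^ p * Aw α β x
                ≤ (Aw α β (x/t) / Aw α β x) * Aw α β x := mul_le_mul_of_nonneg_right hRp hAx.le
              _ = Aw α β (x/t) := div_mul_cancel₀ _ hAx.ne'
          have hreal : ψ t / t * t ^ (1/p)
                * ((|f (x/t)| * (Aw α β (x/t) / Aw α β x) * t ^ (-(1/p))) ^ p * Aw α β x)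
              ≤ ψ t / t * t ^ (1/p - 1) * (|f (x/t)| ^ p * Aw α β (x/t)) := by
            rw [hprod]
            have h4 : t ^ (1/p - 1) = t ^ (1/p) * t⁻¹ := by
              rw [Real.rpow_sub ht0, Real.rpow_one, div_eq_mul_inv]
            rw [h4]
            have h5 : |f (x/t)| ^ p * (Aw α β (x/t) / Aw α β x) ^ p * t⁻¹ * Aw α β x
                = ((Aw α β (x/t) / Aw α β x) ^ p * Aw α β x) * (|f (x/t)| ^ p * t⁻¹) := by ring
            calc ψ t / t * t ^ (1/p)
                  * (|f (x/t)| ^ p * (Aw α β (x/t) / Aw α β x) ^ p * t⁻¹ * Aw α β x)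
                ≤ ψ t / t * t ^ (1/p) * (Aw α β (x/t) * (|f (x/t)| ^ p * t⁻¹)) := by
                  rw [h5]
                  refine mul_le_mul_of_nonneg_left (mul_le_mul_of_nonneg_right hcore ?_) ha0
                  positivity
              _ = ψ t / t * (t ^ (1/p) * t⁻¹) * (|f (x/t)| ^ p * Aw α β (x/t)) := by ring
              _ = ψ t / t * t ^ (1/p) * t⁻¹ * (|f (x/t)| ^ p * Aw α β (x/t)) := by ring
              _ = ψ t / t * (t ^ (1/p) * t⁻¹) * (|f (x/t)| ^ p * Aw α β (x/t)) := by ring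
          calc ENNReal.ofReal (ψ t / t * t ^ (1/p)) *
                ENNReal.ofReal (|f (x/t)| * (Aw α β (x/t) / Aw α β x) * t ^ (-(1/p))) ^ p
                * ENNReal.ofReal (Aw α β x)
              = ENNReal.ofReal (ψ t / t * t ^ (1/p)
                  * ((|f (x/t)| * (Aw α β (x/t) / Aw α β x) * t ^ (-(1/p))) ^ p * Aw α β x)) := by
                rw [ENNReal.ofReal_rpow_of_nonneg hb0 hp0.le, ← ENNReal.ofReal_mul ha0,
                  ← ENNReal.ofReal_mul (mul_nonneg ha0 (Real.rpow_nonneg hb0 _)), mul_assoc]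
            _ ≤ ENNReal.ofReal (ψ t / t * t ^ (1/p - 1) * (|f (x/t)| ^ p * Aw α β (x/t))) :=
                ENNReal.ofReal_le_ofReal hreal
            _ = C t * g (x/t) := by
                show _ = ENNReal.ofReal (ψ t / t * t ^ (1/p - 1))
                  * ENNReal.ofReal (|f (x/t)| ^ p * Aw α β (x/t))
                rw [← ENNReal.ofReal_mul (mul_nonneg (div_nonneg (hψ_nonneg t) ht0.le)
                  (Real.rpow_nonneg ht0.le _))]
  have hEpne : Ep ^ (p-1) ≠ ⊤ := ENNReal.rpow_ne_top_of_nonneg (by linarith) hEfin.ne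
  have hswap : (∫⁻ x in Ioo (0:ℝ) 1, ∫⁻ t in Ioi (1:ℝ), C t * g (x/t))
      = ∫⁻ t in Ioi (1:ℝ), ∫⁻ x in Ioo (0:ℝ) 1, C t * g (x/t) := by
    apply lintegral_lintegral_swap
    exact ((hCm.comp measurable_snd).mul (hgm.comp (measurable_fst.div measurable_snd))).aemeasurable
  have hinner : ∀ t ∈ Ioi (1:ℝ), (∫⁻ x in Ioo (0:ℝ) 1, C t * g (x/t))
      ≤ ENNReal.ofReal (ψ t / t * t ^ (1/p)) * N := by
    intro t ht
    have ht0 : (0:ℝ) < t := lt_trans zero_lt_one ht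
    rw [lintegral_const_mul' _ _ ENNReal.ofReal_ne_top]
    calc C t * ∫⁻ x in Ioo (0:ℝ) 1, g (x/t)
        ≤ C t * (ENNReal.ofReal t * N) :=
          mul_le_mul_right (lintegral_Ioo_div_le g hgm ht.le) _
      _ = (C t * ENNReal.ofReal t) * N := by rw [mul_assoc]
      _ = ENNReal.ofReal (ψ t / t * t ^ (1/p)) * N := by
          rw [hCdef, ← ENNReal.ofReal_mul (mul_nonneg (div_nonneg (hψ_nonneg t) ht0.le)
            (Real.rpow_nonneg ht0.le _))]
          congr 1
          have h3 : t ^ (1/p - 1) * t = t ^ (1/p) := by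
            rw [Real.rpow_sub ht0, Real.rpow_one]
            field_simp
          rw [mul_assoc, h3]
  have main : (∫⁻ x in Ioo (0:ℝ) 1, ENNReal.ofReal (|Hop α β φ f x| ^ p * Aw α β x))
      ≤ Ep ^ p * N := by
    calc (∫⁻ x in Ioo (0:ℝ) 1, ENNReal.ofReal (|Hop α β φ f x| ^ p * Aw α β x))
        ≤ ∫⁻ x in Ioo (0:ℝ) 1, Ep ^ (p-1) * ∫⁻ t in Ioi (1:ℝ), C t * g (x/t) :=
          lintegral_mono_ae ((ae_restrict_iff' measurableSet_Ioo).2 (ae_of_all _ hkey))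
      _ = Ep ^ (p-1) * ∫⁻ x in Ioo (0:ℝ) 1, ∫⁻ t in Ioi (1:ℝ), C t * g (x/t) :=
          lintegral_const_mul' _ _ hEpne
      _ = Ep ^ (p-1) * ∫⁻ t in Ioi (1:ℝ), ∫⁻ x in Ioo (0:ℝ) 1, C t * g (x/t) := by rw [hswap]
      _ ≤ Ep ^ (p-1) * ∫⁻ t in Ioi (1:ℝ), ENNReal.ofReal (ψ t / t * t ^ (1/p)) * N :=
          mul_le_mul_right (lintegral_mono_ae
            ((ae_restrict_iff' measurableSet_Ioi).2 (ae_of_all _ hinner))) _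
      _ = Ep ^ (p-1) * (Ep * N) := by
          have hKEm : Measurable fun t : ℝ => ENNReal.ofReal (ψ t / t * t ^ (1/p)) :=
            ((hψm.div measurable_id).mul (measurable_id.pow measurable_const)).ennreal_ofReal
          rw [lintegral_mul_const'' N hKEm.aemeasurable, ← hEψ]
      _ = Ep ^ p * N := by
          rw [← mul_assoc]
          congr 1
          calc Ep ^ (p-1) * Ep = Ep ^ (p-1) * Ep ^ (1:ℝ) := by rw [ENNReal.rpow_one]
            _ = Ep ^ p := by
                rw [← ENNReal.rpow_add_of_nonneg _ _ (by linarith) zero_le_one, sub_add_cancel]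
  have hfinal : lpN α β p (Ioo 0 1) (Hop α β φ f) ≤ Ep * lpN α β p (Ioo 0 1) f := by
    show (∫⁻ x in Ioo (0:ℝ) 1, ENNReal.ofReal (|Hop α β φ f x| ^ p * Aw α β x)) ^ (1/p)
      ≤ Ep * (∫⁻ x in Ioo (0:ℝ) 1, ENNReal.ofReal (|f x| ^ p * Aw α β x)) ^ (1/p)
    calc (∫⁻ x in Ioo (0:ℝ) 1, ENNReal.ofReal (|Hop α β φ f x| ^ p * Aw α β x)) ^ (1/p)
        ≤ (Ep ^ p * N) ^ (1/p) := ENNReal.rpow_le_rpow main (by positivity)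
      _ = Ep * N ^ (1/p) := by
          rw [ENNReal.mul_rpow_of_nonneg _ _ (by positivity), ← ENNReal.rpow_mul,
            mul_one_div, div_self hp0', ENNReal.rpow_one]
      _ = Ep * (∫⁻ x in Ioo (0:ℝ) 1, ENNReal.ofReal (|f x| ^ p * Aw α β x)) ^ (1/p) := rfl
  refine hfinal.trans ?_
  have h1le : (1:ℝ≥0∞) ≤ ENNReal.ofReal (Aw α β 1 ^ (1 - 1/p)) := by
    rw [ENNReal.one_le_ofReal]
    refine Real.one_le_rpow (one_le_Aw_one α β h2α h2β) ?_
    have : 1/p ≤ 1 := by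
      rw [div_le_one hp0]; linarith
    linarith
  rw [mul_assoc]
  exact le_mul_of_one_le_left' h1le
end

section
/- Let 0 < s < 1, let -∞ < a < b ≤ ∞, and let h be a non-negative and non-increasing function on the interval (a,b). Then (∫_a^b h(t) dt)^s ≤ s · ∫_a^b h(t)^s · (t-a)^{s-1} dt. -/
open MeasureTheory Set ENNReal


lemma tsum_rpow_top {s : ℝ} (hs0 : 0 < s) (hs1 : s < 1) (x : ℤ → ℝ≥0∞)
    (hx : ∑' k, x k = ⊤) : ∑' k, (x k) ^ s = ⊤ := by
  by_contra hT
  set T : ℝ≥0∞ := ∑' k, (x k) ^ s with hTdef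
  have hTne : T ≠ ⊤ := hT
  have hle : ∀ k, (x k) ^ s ≤ T := fun k => ENNReal.le_tsum k
  have hbound : ∀ k, x k ≤ T ^ (1/s) := by
    intro k
    have h1 : ((x k) ^ s) ^ (1/s) ≤ T ^ (1/s) :=
      ENNReal.rpow_le_rpow (hle k) (by positivity)
    rwa [← ENNReal.rpow_mul, mul_one_div, div_self hs0.ne', ENNReal.rpow_one] at h1
  have key : ∀ k, x k ≤ (x k) ^ s * T ^ ((1-s)/s) := by
    intro k
    rcases eq_or_ne (x k) 0 with h0 | h0
    · simp [h0]
    have hxk_ne_top : x k ≠ ⊤ := by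
      intro htop
      have h2 := hle k
      rw [htop, ENNReal.top_rpow_of_pos hs0] at h2
      exact hTne (top_le_iff.mp h2)
    calc x k = (x k) ^ s * (x k) ^ (1-s) := by
          rw [← ENNReal.rpow_add _ _ h0 hxk_ne_top]; norm_num
      _ ≤ (x k) ^ s * (T ^ (1/s)) ^ (1-s) :=
          mul_le_mul_right (ENNReal.rpow_le_rpow (hbound k) (by linarith)) _
      _ = (x k) ^ s * T ^ ((1-s)/s) := by
          rw [← ENNReal.rpow_mul]; ring_nf
  have : ∑' k, x k ≤ T * T ^ ((1-s)/s) := by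
    calc ∑' k, x k ≤ ∑' k, (x k) ^ s * T ^ ((1-s)/s) := ENNReal.tsum_le_tsum key
      _ = T * T ^ ((1-s)/s) := by rw [ENNReal.tsum_mul_right]
  rw [hx] at this
  have hfin : T * T ^ ((1-s)/s) ≠ ⊤ :=
    ENNReal.mul_ne_top hTne (ENNReal.rpow_ne_top_of_nonneg (div_nonneg (by linarith) hs0.le) hTne)
  exact hfin (top_le_iff.mp this)

lemma lint_rpow_Ioc {s : ℝ} (hs0 : 0 < s) {T : ℝ} (hT : 0 ≤ T) :
    ∫⁻ u in Ioc 0 T, ENNReal.ofReal (u ^ (s-1)) = ENNReal.ofReal (T ^ s / s) := by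
  have hint : IntervalIntegrable (fun u : ℝ => u ^ (s-1)) volume 0 T :=
    intervalIntegral.intervalIntegrable_rpow' (by linarith)
  have hio : IntegrableOn (fun u : ℝ => u ^ (s-1)) (Ioc 0 T) volume :=
    (intervalIntegrable_iff_integrableOn_Ioc_of_le hT).mp hint
  have hnn : 0 ≤ᵐ[volume.restrict (Ioc 0 T)] fun u : ℝ => u ^ (s-1) := by
    filter_upwards [ae_restrict_mem measurableSet_Ioc] with u hu
    exact Real.rpow_nonneg hu.1.le _
  rw [← ofReal_integral_eq_lintegral_ofReal hio hnn]
  congr 1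
  rw [← intervalIntegral.integral_of_le hT]
  rw [integral_rpow (Or.inl (by linarith))]
  rw [Real.zero_rpow (by linarith : s - 1 + 1 ≠ 0)]
  ring_nf

lemma finite_case {s : ℝ} (hs0 : 0 < s) (hs1 : s < 1) (a : ℝ) (g : ℝ → ℝ≥0∞)
    (hg : Antitone g) (hfin : ∀ t, a < t → g t ≠ ⊤)
    (S : Set ℝ) (hSm : MeasurableSet S) (hSsub : S ⊆ Ioi a)
    (hSlow : ∀ ⦃t t'⦄, t ∈ S → a < t' → t' ≤ t → t' ∈ S)
    (htot : ∫⁻ t in S, g t ≠ ⊤) :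
    (∫⁻ t in S, g t) ^ s ≤
      ENNReal.ofReal s * ∫⁻ t in S, g t ^ s * ENNReal.ofReal ((t - a) ^ (s-1)) := by
  have gmeas : Measurable g := hg.measurable
  set ν : Measure ℝ := (volume.restrict S).withDensity g with hνdef
  have hν : ∀ A : Set ℝ, MeasurableSet A → ν A = ∫⁻ t in A ∩ S, g t := by
    intro A hA
    rw [hνdef, withDensity_apply _ hA, Measure.restrict_restrict hA]
  have hνuniv : ν univ = ∫⁻ t in S, g t := by
    rw [hν univ MeasurableSet.univ, univ_inter]
  haveI : IsFiniteMeasure ν := ⟨by rw [hνuniv]; exact htot.lt_top⟩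
  set G : ℝ → ℝ := fun t => (ν (Iio t)).toReal with hGdef
  have Gmono : Monotone G := fun t t' htt =>
    ENNReal.toReal_mono (measure_ne_top ν _) (measure_mono (Iio_subset_Iio htt))
  have Gmeas : Measurable G := Gmono.measurable
  have hofReal : ∀ t, ENNReal.ofReal (G t) = ν (Iio t) := fun t =>
    ENNReal.ofReal_toReal (measure_ne_top ν _)
  set T : ℝ := (ν univ).toReal with hTdef
  have hT0 : 0 ≤ T := ENNReal.toReal_nonneg
  have hGle : ∀ t, G t ≤ T := fun t =>
    ENNReal.toReal_mono (measure_ne_top ν _) (measure_mono (subset_univ _))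
  have hνT : ν univ = ENNReal.ofReal T := (ENNReal.ofReal_toReal (measure_ne_top ν _)).symm
  -- the clamp lemma
  have clamp : ∀ c : ℝ, 0 ≤ c → c < T → ν {t | G t ≤ c} = ENNReal.ofReal c := by
    intro c hc0 hcT
    set E : Set ℝ := {t | G t ≤ c} with hEdef
    have hGa : G a = 0 := by
      have : ν (Iio a) = 0 := by
        rw [hν _ measurableSet_Iio]
        have : Iio a ∩ S = ∅ := by
          ext x; simp only [mem_inter_iff, mem_Iio, mem_empty_iff_false, iff_false]
          rintro ⟨hx1, hx2⟩; exact absurd (hSsub hx2) (not_lt.2 hx1.le)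
        rw [this, Measure.restrict_empty, lintegral_zero_measure]
      rw [hGdef]; simp [this]
    have hEa : a ∈ E := by rw [hEdef]; simp [hGa, hc0]
    have hEne : E.Nonempty := ⟨a, hEa⟩
    have hc' : ENNReal.ofReal c < ν univ := by
      rw [hνT]; exact ENNReal.ofReal_lt_ofReal_iff_of_nonneg hc0 |>.mpr hcT
    have hEbdd : BddAbove E := by
      have hun : (⋃ n : ℕ, Iio (n:ℝ)) = univ := by
        ext x; simp only [mem_iUnion, mem_Iio, mem_univ, iff_true]
        obtain ⟨n, hn⟩ := exists_nat_gt x; exact ⟨n, hn⟩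
      have : ν univ = ⨆ n : ℕ, ν (Iio (n:ℝ)) := by
        rw [← hun]
        exact Monotone.measure_iUnion (fun n m hnm => Iio_subset_Iio (by exact_mod_cast hnm))
      rw [this] at hc'
      obtain ⟨n, hn⟩ := lt_iSup_iff.mp hc'
      refine ⟨n, fun t ht => ?_⟩
      by_contra hcon
      push_neg at hcon
      have h1 : c < G n := by
        have := (ENNReal.ofReal_lt_iff_lt_toReal hc0 (measure_ne_top ν _)).mp hn
        exact this
      have h2 : G n ≤ G t := Gmono hcon.le
      exact absurd (h2.trans ht) (not_le.2 h1)
    set τ : ℝ := sSup E with hτdef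
    have hIioE : Iio τ ⊆ E := by
      intro t ht
      obtain ⟨e, he, hte⟩ := exists_lt_of_lt_csSup hEne ht
      exact le_trans (Gmono hte.le) he
    have hνIio : ν (Iio τ) ≤ ENNReal.ofReal c := by
      have hun : Iio τ = ⋃ n : ℕ, Iio (τ - 1/(n+1)) := by
        ext x
        simp only [mem_iUnion, mem_Iio]
        constructor
        · intro hx
          obtain ⟨n, hn⟩ := exists_nat_one_div_lt (sub_pos.2 hx)
          exact ⟨n, by push_cast at hn ⊢; linarith⟩
        · rintro ⟨n, hn⟩
          have : (0:ℝ) < 1/(n+1) := by positivity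
          linarith
      rw [hun, Monotone.measure_iUnion]
      · refine iSup_le fun n => ?_
        have hmem : τ - 1/(n+1) ∈ E := hIioE (mem_Iio.mpr (sub_lt_self τ (by positivity)))
        rw [← hofReal]
        exact ENNReal.ofReal_le_ofReal hmem
      · intro n m hnm
        apply Iio_subset_Iio
        have : (1:ℝ)/(m+1) ≤ 1/(n+1) := by
          apply one_div_le_one_div_of_le (by positivity)
          push_cast; exact_mod_cast by exact_mod_cast add_le_add_left (Nat.cast_le.2 hnm) 1
        linarith
    have hνIic : ENNReal.ofReal c ≤ ν (Iic τ) := by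
      have hun : Iic τ = ⋂ n : ℕ, Iio (τ + 1/(n+1)) := by
        ext x
        simp only [mem_iInter, mem_Iio, mem_Iic]
        constructor
        · intro hx n
          have : (0:ℝ) < 1/(n+1) := by positivity
          linarith
        · intro hx
          by_contra hcon
          push_neg at hcon
          obtain ⟨n, hn⟩ := exists_nat_one_div_lt (sub_pos.2 hcon)
          have := hx n
          push_cast at hn this ⊢
          linarith
      rw [hun, Antitone.measure_iInter]
      · refine le_iInf fun n => ?_
        have hpos : (0:ℝ) < 1/(n+1) := by positivity
        have hnotmem : τ + 1/(n+1) ∉ E := by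
          intro hmem
          have := le_csSup hEbdd hmem
          linarith
        have : c < G (τ + 1/(n+1)) := by
          simpa [hEdef, not_le] using hnotmem
        rw [← hofReal]
        exact ENNReal.ofReal_le_ofReal this.le
      · intro n m hnm
        apply Iio_subset_Iio
        have : (1:ℝ)/(m+1) ≤ 1/(n+1) := by
          apply one_div_le_one_div_of_le (by positivity)
          exact_mod_cast add_le_add_left (Nat.cast_le.2 hnm) 1
        linarith
      · exact fun n => measurableSet_Iio.nullMeasurableSet
      · exact ⟨0, measure_ne_top ν _⟩
    have hatom : ν {τ} = 0 := by
      rw [hν _ (measurableSet_singleton τ)]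
      exact setLIntegral_measure_zero _ _
        (measure_mono_null inter_subset_left (Real.volume_singleton))
    have hEIic : E ⊆ Iic τ := fun t ht => le_csSup hEbdd ht
    have h1 : ν E ≤ ENNReal.ofReal c :=
      calc ν E ≤ ν (Iic τ) := measure_mono hEIic
        _ ≤ ν (Iio τ) + ν {τ} := by
            rw [← Iio_union_right]; exact measure_union_le _ _
        _ = ν (Iio τ) := by rw [hatom, add_zero]
        _ ≤ ENNReal.ofReal c := hνIio
    have h2 : ENNReal.ofReal c ≤ ν E :=
      calc ENNReal.ofReal c ≤ ν (Iic τ) := hνIic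
        _ ≤ ν (Iio τ) + ν {τ} := by
            rw [← Iio_union_right]; exact measure_union_le _ _
        _ = ν (Iio τ) := by rw [hatom, add_zero]
        _ ≤ ν E := measure_mono hIioE
    exact le_antisymm h1 h2
  haveI : IsFiniteMeasure (Measure.map G ν) := by
    constructor
    rw [Measure.map_apply Gmeas MeasurableSet.univ, preimage_univ]
    exact measure_lt_top ν univ
  have hΦ : Measurable fun u : ℝ => ENNReal.ofReal (u ^ (s-1)) :=
    (measurable_id.pow_const (s-1)).ennreal_ofReal
  have hmap : Measure.map G ν = volume.restrict (Ioc 0 T) := by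
    apply Measure.ext_of_Iic
    intro c
    rw [Measure.map_apply Gmeas measurableSet_Iic]
    have hrhs : volume.restrict (Ioc 0 T) (Iic c) = ENNReal.ofReal (min c T) := by
      rw [Measure.restrict_apply measurableSet_Iic]
      have hset : Iic c ∩ Ioc 0 T = Ioc 0 (min c T) := by
        ext x
        simp only [mem_inter_iff, mem_Iic, mem_Ioc, le_min_iff]
        constructor
        · rintro ⟨h1, h2, h3⟩; exact ⟨h2, h1, h3⟩
        · rintro ⟨h1, h2, h3⟩; exact ⟨h2, h1, h3⟩
      rw [hset, Real.volume_Ioc, sub_zero]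
    rw [hrhs]
    rcases lt_or_ge c 0 with hc | hc
    · have hempty : G ⁻¹' Iic c = ∅ := by
        ext t
        simp only [mem_preimage, mem_Iic, mem_empty_iff_false, iff_false, not_le]
        exact lt_of_lt_of_le hc ENNReal.toReal_nonneg
      rw [hempty, measure_empty, min_eq_left (hc.le.trans hT0),
        ENNReal.ofReal_of_nonpos hc.le]
    · rcases lt_or_ge c T with hcT | hTc
      · have : G ⁻¹' Iic c = {t | G t ≤ c} := rfl
        rw [this, clamp c hc hcT, min_eq_left hcT.le]
      · have huniv : G ⁻¹' Iic c = univ := by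
          ext t
          simp only [mem_preimage, mem_Iic, mem_univ, iff_true]
          exact (hGle t).trans hTc
        rw [huniv, hνT, min_eq_right hTc]
  have pointwise : ∀ t ∈ S,
      g t * ENNReal.ofReal (G t ^ (s-1)) ≤ g t ^ s * ENNReal.ofReal ((t - a) ^ (s-1)) := by
    intro t ht
    rcases eq_or_ne (g t) 0 with h0 | h0
    · simp [h0]
    · have hta : a < t := hSsub ht
      have hgtop := hfin t hta
      have hr : 0 < (g t).toReal := ENNReal.toReal_pos h0 hgtop
      set r := (g t).toReal with hrdef
      have hsub : Ioo a t ⊆ Iio t ∩ S := fun x hx => ⟨hx.2, hSlow ht hx.1 hx.2.le⟩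
      have hlow : ENNReal.ofReal (r * (t - a)) ≤ ν (Iio t) := by
        rw [hν _ measurableSet_Iio]
        calc ENNReal.ofReal (r * (t-a)) = g t * volume (Ioo a t) := by
              rw [Real.volume_Ioo, ENNReal.ofReal_mul hr.le, ENNReal.ofReal_toReal hgtop]
          _ = ∫⁻ _ in Ioo a t, g t := (setLIntegral_const _ _).symm
          _ ≤ ∫⁻ x in Ioo a t, g x :=
              setLIntegral_mono' measurableSet_Ioo (fun x hx => hg hx.2.le)
          _ ≤ ∫⁻ x in Iio t ∩ S, g x := lintegral_mono_set hsub
      have hGlow : r * (t - a) ≤ G t := by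
        have h2 := ENNReal.toReal_mono (measure_ne_top ν _) hlow
        rwa [ENNReal.toReal_ofReal (by nlinarith)] at h2
      have hGpos : 0 < r * (t - a) := by nlinarith
      have hrpow : (G t) ^ (s-1) ≤ (r * (t-a)) ^ (s-1) :=
        Real.rpow_le_rpow_of_nonpos hGpos hGlow (by linarith)
      calc g t * ENNReal.ofReal (G t ^ (s-1))
          ≤ g t * ENNReal.ofReal ((r * (t-a)) ^ (s-1)) :=
            mul_le_mul_right (ENNReal.ofReal_le_ofReal hrpow) _
        _ = g t ^ s * ENNReal.ofReal ((t - a) ^ (s-1)) := by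
            have hkey : r * (r ^ (s-1) * (t-a) ^ (s-1)) = r ^ s * (t-a) ^ (s-1) := by
              have h2 := (Real.rpow_add hr 1 (s-1)).symm
              rw [Real.rpow_one] at h2
              rw [← mul_assoc, h2]
              norm_num
            rw [← ENNReal.ofReal_toReal hgtop, ← hrdef,
              Real.mul_rpow hr.le (by linarith : (0:ℝ) ≤ t - a),
              ← ENNReal.ofReal_mul hr.le, hkey,
              ENNReal.ofReal_mul (Real.rpow_nonneg hr.le s),
              ENNReal.ofReal_rpow_of_nonneg hr.le hs0.le]
  calc (∫⁻ t in S, g t) ^ s = ENNReal.ofReal (T ^ s) := by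
        rw [← hνuniv, hνT, ← ENNReal.ofReal_rpow_of_nonneg hT0 hs0.le]
    _ = ENNReal.ofReal s * ENNReal.ofReal (T ^ s / s) := by
        rw [← ENNReal.ofReal_mul hs0.le]
        congr 1
        field_simp
    _ = ENNReal.ofReal s * ∫⁻ u in Ioc 0 T, ENNReal.ofReal (u ^ (s-1)) := by
        rw [lint_rpow_Ioc hs0 hT0]
    _ = ENNReal.ofReal s * ∫⁻ t, ENNReal.ofReal ((G t) ^ (s-1)) ∂ν := by
        rw [← hmap, lintegral_map hΦ Gmeas]
    _ = ENNReal.ofReal s * ∫⁻ t in S, g t * ENNReal.ofReal ((G t) ^ (s-1)) := by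
        congr 1
        rw [hνdef]
        exact lintegral_withDensity_eq_lintegral_mul _ gmeas (hΦ.comp Gmeas)
    _ ≤ ENNReal.ofReal s * ∫⁻ t in S, g t ^ s * ENNReal.ofReal ((t - a) ^ (s-1)) :=
        mul_le_mul_right (setLIntegral_mono' hSm pointwise) _



lemma infinite_case {s : ℝ} (hs0 : 0 < s) (hs1 : s < 1) (a : ℝ) (g : ℝ → ℝ≥0∞)
    (hg : Antitone g) (hfin : ∀ t, a < t → g t ≠ ⊤)
    (S : Set ℝ) (hSm : MeasurableSet S) (hSsub : S ⊆ Ioi a)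
    (hSlow : ∀ ⦃t t'⦄, t ∈ S → a < t' → t' ≤ t → t' ∈ S)
    (htot : ∫⁻ t in S, g t = ⊤) :
    ∫⁻ t in S, g t ^ s * ENNReal.ofReal ((t - a) ^ (s-1)) = ⊤ := by
  set I : ℤ → Set ℝ := fun k => Ioc (a + 2^(k-1)) (a + 2^k) with hIdef
  have hpow_pos : ∀ k : ℤ, (0:ℝ) < 2^k := fun k => zpow_pos two_pos k
  have hIdisj : Pairwise (Function.onFun Disjoint I) := by
    intro k m hkm
    simp only [Function.onFun, hIdef]
    rw [Set.disjoint_left]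
    intro t htk htm
    rcases lt_or_gt_of_ne hkm with hlt | hlt
    · have h1 : (2:ℝ)^k ≤ 2^(m-1) := zpow_le_zpow_right₀ one_le_two (by omega)
      have := htk.2; have := htm.1; linarith
    · have h1 : (2:ℝ)^m ≤ 2^(k-1) := zpow_le_zpow_right₀ one_le_two (by omega)
      have := htm.2; have := htk.1; linarith
  have hcover : Ioi a = ⋃ k, I k := by
    ext t
    simp only [mem_Ioi, mem_iUnion, hIdef, mem_Ioc]
    constructor
    · intro ht
      obtain ⟨n, hn⟩ := exists_mem_Ioc_zpow (sub_pos.2 ht) (one_lt_two (α := ℝ))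
      refine ⟨n + 1, ?_, ?_⟩
      · rw [show n + 1 - 1 = n by ring]; linarith [hn.1]
      · linarith [hn.2]
    · rintro ⟨k, hk1, hk2⟩
      have := hpow_pos (k-1); linarith
  have hJdisj : Pairwise (Function.onFun Disjoint fun k : ℤ => I k ∩ S) :=
    fun k m hkm => Disjoint.mono inter_subset_left inter_subset_left (hIdisj hkm)
  have hJdisj' : Pairwise (Function.onFun Disjoint fun k : ℤ => I (k-1) ∩ S) :=
    fun k m hkm =>
      Disjoint.mono inter_subset_left inter_subset_left (hIdisj (by omega : k - 1 ≠ m - 1))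
  have hIm : ∀ k : ℤ, MeasurableSet (I k ∩ S) := fun k => measurableSet_Ioc.inter hSm
  have hIm' : ∀ k : ℤ, MeasurableSet (I (k-1) ∩ S) := fun k => measurableSet_Ioc.inter hSm
  have hUnion : (⋃ k, I k ∩ S) = S := by
    rw [← iUnion_inter, ← hcover, inter_eq_right.mpr hSsub]
  have hUI : (⋃ k : ℤ, I (k-1)) = ⋃ k, I k := by
    apply subset_antisymm
    · exact iUnion_subset fun k => subset_iUnion I (k-1)
    · intro t ht
      rcases mem_iUnion.mp ht with ⟨k, hk⟩
      exact mem_iUnion.mpr ⟨k+1, by rw [show k+1-1 = k by ring]; exact hk⟩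
  have hUnion' : (⋃ k : ℤ, I (k-1) ∩ S) = S := by
    rw [← iUnion_inter, hUI, iUnion_inter, hUnion]
  set x : ℤ → ℝ≥0∞ := fun k => ∫⁻ t in I k ∩ S, g t with hxdef
  set y : ℤ → ℝ≥0∞ := fun k => ∫⁻ t in I (k-1) ∩ S, g t ^ s * ENNReal.ofReal ((t - a) ^ (s-1))
    with hydef
  have hsumx : ∑' k, x k = ⊤ := by
    rw [hxdef, ← lintegral_iUnion hIm hJdisj, hUnion, htot]
  have hsumy : ∑' k, y k = ∫⁻ t in S, g t ^ s * ENNReal.ofReal ((t - a) ^ (s-1)) := by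
    rw [hydef, ← lintegral_iUnion hIm' hJdisj', hUnion']
  have perk : ∀ k : ℤ, x k ^ s ≤ 2 * y k := by
    intro k
    by_cases hxk : x k = 0
    · rw [hxk, ENNReal.zero_rpow_of_pos hs0]; exact zero_le
    have hne : (I k ∩ S).Nonempty := by
      rw [nonempty_iff_ne_empty]
      intro hemp
      exact hxk (by rw [hxdef]; simp only; rw [hemp, Measure.restrict_empty, lintegral_zero_measure])
    obtain ⟨τ, hτI, hτS⟩ := hne
    set m : ℝ := a + 2^(k-1) with hmdef
    have hm_a : a < m := by have := hpow_pos (k-1); simp [hmdef]; linarith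
    have hsubS : I (k-1) ⊆ S := by
      intro t ht
      have ht1 : a + 2^(k-1-1) < t := ht.1
      have ht2 : t ≤ a + 2^(k-1) := ht.2
      have hta : a < t := by have := hpow_pos (k-1-1); linarith
      exact hSlow hτS hta (ht2.trans hτI.1.le)
    have hIk1 : I (k-1) ∩ S = I (k-1) := inter_eq_left.mpr hsubS
    have hvol1 : volume (I (k-1)) = ENNReal.ofReal ((2:ℝ)^(k-2)) := by
      rw [hIdef]
      simp only
      rw [Real.volume_Ioc]
      congr 1
      have : (2:ℝ)^(k-1) = 2^(k-2) * 2 := by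
        rw [← zpow_add_one₀ (by norm_num : (2:ℝ) ≠ 0)]; congr 1; ring
      rw [show k - 1 - 1 = k - 2 by ring]
      linarith
    have hvol2 : volume (I k) = ENNReal.ofReal ((2:ℝ)^(k-1)) := by
      rw [hIdef]
      simp only
      rw [Real.volume_Ioc]
      congr 1
      have : (2:ℝ)^k = 2^(k-1) * 2 := by
        rw [← zpow_add_one₀ (by norm_num : (2:ℝ) ≠ 0)]; congr 1; ring
      linarith
    have hglow : ∀ t ∈ I (k-1),
        g m ^ s * ENNReal.ofReal (((2:ℝ)^(k-1)) ^ (s-1)) ≤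
          g t ^ s * ENNReal.ofReal ((t - a) ^ (s-1)) := by
      intro t ht
      have ht2 : t ≤ m := ht.2
      have hta : 0 < t - a := by have := hpow_pos (k-1-1); have := ht.1; linarith
      have htm : t - a ≤ 2^(k-1) := by have := ht.2; simp only [hmdef] at ht2 ⊢; linarith
      exact mul_le_mul' (ENNReal.rpow_le_rpow (hg ht2) hs0.le)
        (ENNReal.ofReal_le_ofReal (Real.rpow_le_rpow_of_nonpos hta htm (by linarith)))
    have hylow : g m ^ s * ENNReal.ofReal (((2:ℝ)^(k-1)) ^ (s-1)) * ENNReal.ofReal ((2:ℝ)^(k-2))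
        ≤ y k := by
      calc g m ^ s * ENNReal.ofReal (((2:ℝ)^(k-1)) ^ (s-1)) * ENNReal.ofReal ((2:ℝ)^(k-2))
          = g m ^ s * ENNReal.ofReal (((2:ℝ)^(k-1)) ^ (s-1)) * volume (I (k-1)) := by
            rw [hvol1]
        _ = ∫⁻ _ in I (k-1), g m ^ s * ENNReal.ofReal (((2:ℝ)^(k-1)) ^ (s-1)) :=
            (setLIntegral_const _ _).symm
        _ ≤ ∫⁻ t in I (k-1), g t ^ s * ENNReal.ofReal ((t - a) ^ (s-1)) :=
            setLIntegral_mono' measurableSet_Ioc hglow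
        _ = y k := by rw [hydef]; simp only; rw [hIk1]
    have hxup : x k ≤ g m * ENNReal.ofReal ((2:ℝ)^(k-1)) := by
      calc x k ≤ ∫⁻ t in I k, g t := lintegral_mono_set inter_subset_left
        _ ≤ ∫⁻ _ in I k, g m := setLIntegral_mono' measurableSet_Ioc (fun t ht => hg ht.1.le)
        _ = g m * volume (I k) := setLIntegral_const _ _
        _ = g m * ENNReal.ofReal ((2:ℝ)^(k-1)) := by rw [hvol2]
    calc x k ^ s ≤ (g m * ENNReal.ofReal ((2:ℝ)^(k-1))) ^ s :=
          ENNReal.rpow_le_rpow hxup hs0.le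
      _ = g m ^ s * ENNReal.ofReal (((2:ℝ)^(k-1)) ^ s) := by
          rw [ENNReal.mul_rpow_of_nonneg _ _ hs0.le,
            ENNReal.ofReal_rpow_of_nonneg (hpow_pos _).le hs0.le]
      _ = 2 * (g m ^ s * ENNReal.ofReal (((2:ℝ)^(k-1)) ^ (s-1)) * ENNReal.ofReal ((2:ℝ)^(k-2)))
          := by
          have hz : (0:ℝ) < (2:ℝ)^(k-1) := hpow_pos _
          have hkey : ((2:ℝ)^(k-1)) ^ (s-1) * (2:ℝ)^(k-2) = ((2:ℝ)^(k-1)) ^ s / 2 := by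
            have h1 : ((2:ℝ)^(k-1)) ^ (s-1) * ((2:ℝ)^(k-1)) = ((2:ℝ)^(k-1)) ^ s := by
              have h2 := (Real.rpow_add hz (s-1) 1).symm
              rw [Real.rpow_one] at h2
              rw [h2]; congr 1; ring
            have h3 : (2:ℝ)^(k-2) = (2:ℝ)^(k-1) / 2 := by
              rw [eq_div_iff (by norm_num : (2:ℝ) ≠ 0),
                ← zpow_add_one₀ (by norm_num : (2:ℝ) ≠ 0)]
              congr 1; ring
            rw [h3, ← h1]; ring
          rw [mul_assoc, ← ENNReal.ofReal_mul (Real.rpow_nonneg hz.le _), hkey]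
          rw [mul_comm (2:ℝ≥0∞) _, mul_assoc]
          congr 1
          rw [← ENNReal.ofReal_ofNat 2,
            ← ENNReal.ofReal_mul (div_nonneg (Real.rpow_nonneg hz.le _) (by norm_num))]
          congr 1
          field_simp
      _ ≤ 2 * y k := mul_le_mul_right hylow _
  have hxs : ∑' k, x k ^ s = ⊤ := tsum_rpow_top hs0 hs1 x hsumx
  have hle : (⊤:ℝ≥0∞) ≤ 2 * ∑' k, y k := by
    rw [← hxs, ← ENNReal.tsum_mul_left]
    exact ENNReal.tsum_le_tsum perk
  have hys : ∑' k, y k = ⊤ := by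
    by_contra hcon
    exact (ENNReal.mul_ne_top (by norm_num) hcon) (top_le_iff.mp hle)
  rw [← hsumy, hys]


/-- If `0 < s < 1`, `-∞ < a < b ≤ ∞`, and `h` is non-negative and non-increasing on `(a,b)`,
then `(∫_a^b h(t) dt)^s ≤ s ∫_a^b h(t)^s (t-a)^{s-1} dt`. -/
theorem pow_integral_le_integral_pow (s : ℝ) (hs0 : 0 < s) (hs1 : s < 1)
    (a : ℝ) (b : EReal) (hab : (a : EReal) < b)
    (h : ℝ → ℝ)
    (hpos : ∀ t : ℝ, a < t → (t : EReal) < b → 0 ≤ h t)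
    (hmono : ∀ x y : ℝ, a < x → x ≤ y → (y : EReal) < b → h y ≤ h x) :
    (∫⁻ t in {t : ℝ | a < t ∧ (t : EReal) < b}, ENNReal.ofReal (h t)) ^ s ≤
      ENNReal.ofReal s *
        ∫⁻ t in {t : ℝ | a < t ∧ (t : EReal) < b},
          ENNReal.ofReal (h t ^ s * (t - a) ^ (s - 1)) := by
  set S : Set ℝ := {t : ℝ | a < t ∧ (t : EReal) < b} with hSdef
  have hSm : MeasurableSet S := by
    have : S = Ioi a ∩ (Real.toEReal ⁻¹' Iio b) := by
      ext t
      simp only [hSdef, mem_setOf_eq, mem_inter_iff, mem_Ioi, mem_preimage, mem_Iio]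
    rw [this]
    exact measurableSet_Ioi.inter (measurable_coe_real_ereal measurableSet_Iio)
  set g : ℝ → ℝ≥0∞ := fun t =>
    if t ≤ a then ⊤ else if (t : EReal) < b then ENNReal.ofReal (h t) else 0 with hgdef
  have hgS : ∀ t ∈ S, g t = ENNReal.ofReal (h t) := by
    intro t ht
    rw [hgdef]
    simp only
    rw [if_neg (not_le.2 ht.1), if_pos ht.2]
  have hg : Antitone g := by
    intro u v huv
    rw [hgdef]
    simp only
    by_cases hu : u ≤ a
    · rw [if_pos hu]; exact le_top
    · have hv : ¬ v ≤ a := fun hva => hu (huv.trans hva)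
      rw [if_neg hu, if_neg hv]
      by_cases hvb : (v : EReal) < b
      · have hub : (u : EReal) < b := lt_of_le_of_lt (EReal.coe_le_coe_iff.mpr huv) hvb
        rw [if_pos hvb, if_pos hub]
        exact ENNReal.ofReal_le_ofReal (hmono u v (not_le.1 hu) huv hvb)
      · rw [if_neg hvb]
        exact zero_le
  have hfin : ∀ t, a < t → g t ≠ ⊤ := by
    intro t ht
    rw [hgdef]
    simp only
    rw [if_neg (not_le.2 ht)]
    split
    · exact ENNReal.ofReal_ne_top
    · exact ENNReal.zero_ne_top
  have hSsub : S ⊆ Ioi a := fun t ht => ht.1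
  have hSlow : ∀ ⦃t t'⦄, t ∈ S → a < t' → t' ≤ t → t' ∈ S := by
    intro t t' ht ht' htt
    exact ⟨ht', lt_of_le_of_lt (EReal.coe_le_coe_iff.mpr htt) ht.2⟩
  have hLHS : ∫⁻ t in S, ENNReal.ofReal (h t) = ∫⁻ t in S, g t :=
    setLIntegral_congr_fun hSm (fun t ht => (hgS t ht).symm)
  have hRHS : ∫⁻ t in S, ENNReal.ofReal (h t ^ s * (t - a) ^ (s - 1)) =
      ∫⁻ t in S, g t ^ s * ENNReal.ofReal ((t - a) ^ (s - 1)) := by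
    apply setLIntegral_congr_fun hSm (fun t ht => ?_)
    rw [hgS t ht, ENNReal.ofReal_mul (Real.rpow_nonneg (hpos t ht.1 ht.2) s),
      ENNReal.ofReal_rpow_of_nonneg (hpos t ht.1 ht.2) hs0.le]
  rw [hLHS, hRHS]
  by_cases htot : ∫⁻ t in S, g t = ⊤
  · rw [infinite_case hs0 hs1 a g hg hfin S hSm hSsub hSlow htot]
    rw [ENNReal.mul_top (by simp [ENNReal.ofReal_eq_zero, not_le, hs0] : ENNReal.ofReal s ≠ 0)]
    exact le_top
  · exact finite_case hs0 hs1 a g hg hfin S hSm hSsub hSlow htot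
end
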